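/- arXiv:1001.5224 — 7 statements merged into one kernel-verified Lean document; each statement's English description precedes it below -/
import Mathlib

section
/- Let D be an integral domain, I a nonzero fractional ideal of D that is flat as a D-module, and T an overring of D (D ⊆ T ⊆ K). Then IT is flat as a T-module. -/
open scoped nonZeroDivisors

section Defs
variable (D K : Type*) [CommRing D] [IsDomain D] [Field K] [Algebra D K] [IsFractionRing D K]

/-- The endomorphism ring `(N : N) = {x ∈ K | x N ⊆ N}` of a `D`-submodule of `K`,
as a subalgebra of `K`. -/
def ends (N : Submodule D K) : Subalgebra D K where
  carrier := {x : K | ∀ y ∈ N, x * y ∈ N}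
  mul_mem' := fun {a b} ha hb y hy => by
    rw [mul_assoc]; exact ha _ (hb _ hy)
  add_mem' := fun {a b} ha hb y hy => by
    rw [add_mul]; exact N.add_mem (ha _ hy) (hb _ hy)
  algebraMap_mem' := fun r y hy => by
    rw [← Algebra.smul_def]; exact N.smul_mem r hy

/-- `N` viewed as a module over its endomorphism ring `(N : N)`. -/
noncomputable def overEnds (N : Submodule D K) : Submodule (ends D K N) K :=
  Submodule.span (ends D K N) (N : Set K)

/-- A `D`-submodule `N` of `K` is quasi-stable if it is flat as a module over its
endomorphism ring `(N : N)`. -/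
def IsQuasiStable (N : Submodule D K) : Prop :=
  Module.Flat (ends D K N) (overEnds D K N)

/-- The `t`-closure of a fractional ideal: the union of the divisorial closures
`J_v = (D : (D : J))` of the finitely generated fractional subideals `J`. -/
noncomputable def tClosure (I : FractionalIdeal D⁰ K) : Submodule D K :=
  ⨆ J : {J : FractionalIdeal D⁰ K // J ≤ I ∧ (J : Submodule D K).FG},
    ((1 / (1 / (J : FractionalIdeal D⁰ K)) : FractionalIdeal D⁰ K) : Submodule D K)

end Defs

open TensorProduct in
set_option maxHeartbeats 1000000 in
set_option synthInstance.maxHeartbeats 1000000 in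
/-- If `I` is a flat nonzero fractional ideal of `D` and `T` an overring of `D`
(inside the quotient field `K`), then `IT` is flat as a `T`-module. -/
theorem flat_extension_to_overring
    (D K : Type*) [CommRing D] [IsDomain D] [Field K] [Algebra D K] [IsFractionRing D K]
    (I : FractionalIdeal D⁰ K) (hI : I ≠ 0)
    (hflat : Module.Flat D (I : Submodule D K))
    (T : Subalgebra D K) :
    Module.Flat T (Submodule.span T ((I : Submodule D K) : Set K)) := by
  have : Module.Flat D (I : Submodule D K) := hflat
  set M : Submodule D K := (I : Submodule D K) with hM
  let f : M →ₗ[D] K := M.subtype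
  -- a nonzero element of M
  obtain ⟨m0, hm0M, hm0⟩ : ∃ x ∈ M, x ≠ 0 := by
    rw [← Submodule.ne_bot_iff]
    simpa [hM, FractionalIdeal.coeToSubmodule_eq_bot] using hI
  have hloc : IsLocalizedModule D⁰ f := by
    constructor
    · intro s
      rw [Module.End.isUnit_iff]
      have hs : (algebraMap D K s) ≠ 0 := by
        simpa using (IsLocalization.map_units K s).ne_zero
      constructor
      · intro x y hxy
        simp only [Module.algebraMap_end_apply, Algebra.smul_def] at hxy
        exact mul_left_cancel₀ hs hxy
      · intro x
        refine ⟨(algebraMap D K s)⁻¹ * x, ?_⟩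
        simp [Module.algebraMap_end_apply, Algebra.smul_def, ← mul_assoc,
          mul_inv_cancel₀ hs]
    · intro y
      obtain ⟨⟨c, s⟩, hcs⟩ := IsLocalization.surj (M := D⁰) (S := K) (y * m0⁻¹)
      refine ⟨⟨c • ⟨m0, hm0M⟩, s⟩, ?_⟩
      have : y * m0⁻¹ * algebraMap D K s = algebraMap D K c := hcs
      have h2 : y * algebraMap D K s = algebraMap D K c * m0 := by
        field_simp at this ⊢
        linear_combination this
      simp only [f, Submodule.subtype_apply, Submodule.coe_smul, Algebra.smul_def]
      rw [mul_comm] at h2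
      rw [Submonoid.smul_def, Algebra.smul_def]
      exact h2
    · intro x y h
      exact ⟨1, by simpa using Subtype.ext (by simpa [f] using h)⟩
  have hbc : IsBaseChange K f := (isLocalizedModule_iff_isBaseChange D⁰ K f).mp hloc
  let χ : K ⊗[D] M →ₗ[K] K := f.liftBaseChange K
  have hχeq : χ = hbc.equiv.toLinearMap := by
    apply LinearMap.restrictScalars_injective D
    ext m
    simp [χ, hbc.equiv_tmul]
  have hχ : Function.Injective χ := by
    rw [hχeq]; exact hbc.equiv.injective
  let ψ : T ⊗[D] M →ₗ[D] K ⊗[D] M := (T.val.toLinearMap).rTensor M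
  have hψ : Function.Injective ψ :=
    Module.Flat.rTensor_preserves_injective_linearMap _ Subtype.val_injective
  let φ : T ⊗[D] M →ₗ[T] K := f.liftBaseChange T
  have hcomp : ∀ x, χ (ψ x) = φ x := by
    intro x
    induction x using TensorProduct.induction_on with
    | zero => simp
    | tmul t m =>
      simp only [χ, ψ, φ, LinearMap.rTensor_tmul, LinearMap.liftBaseChange_tmul,
        Algebra.smul_def, AlgHom.toLinearMap_apply, Subalgebra.coe_val]
      rfl
    | add a b ha hb => simp [map_add, ha, hb]
  have hφ : Function.Injective φ := by
    intro a b hab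
    exact hψ (hχ (by rw [hcomp, hcomp, hab]))
  have hrange : LinearMap.range φ = Submodule.span T (M : Set K) := by
    apply le_antisymm
    · rintro x ⟨y, rfl⟩
      induction y using TensorProduct.induction_on with
      | zero => simp
      | tmul t m =>
        have : (m : K) ∈ Submodule.span T (M : Set K) := Submodule.subset_span m.2
        simpa [φ, f] using Submodule.smul_mem _ t this
      | add a b ha hb => rw [map_add]; exact Submodule.add_mem _ ha hb
    · rw [Submodule.span_le]
      intro m hm
      exact ⟨1 ⊗ₜ ⟨m, hm⟩, by simp [φ]; rfl⟩
  have e : (T ⊗[D] M) ≃ₗ[T] LinearMap.range φ := LinearEquiv.ofInjective φ hφ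
  have : Module.Flat T (T ⊗[D] M) := inferInstance
  have : Module.Flat T (LinearMap.range φ) := Module.Flat.of_linearEquiv e.symm
  rwa [hrange] at this
end

section
/- Let D be an integral domain and I a nonzero fractional ideal of D. If I is flat as a D-module, then I is quasi-stable, i.e., I is flat as a module over its endomorphism ring (I:I). -/
open scoped nonZeroDivisors

set_option synthInstance.maxHeartbeats 1000000
set_option maxHeartbeats 2000000

section AuxFlat
variable (D K : Type*) [CommRing D] [IsDomain D] [Field K] [Algebra D K] [IsFractionRing D K]

theorem subalgebra_smul_def (S : Subalgebra D K) (e : S) (k : K) : e • k = (e : K) * k :=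
  (Algebra.smul_def e k).trans (by rw [Subalgebra.algebraMap_eq]; rfl)

def botCopy (N : Submodule D K) : Submodule (⊥ : Subalgebra D K) K where
  carrier := N
  add_mem' := N.add_mem
  zero_mem' := N.zero_mem
  smul_mem' := by
    rintro ⟨c, hc⟩ x hx
    rw [Algebra.mem_bot] at hc
    obtain ⟨d, rfl⟩ := hc
    show _ ∈ N
    rw [subalgebra_smul_def, ← Algebra.smul_def]
    exact N.smul_mem d hx

omit [IsDomain D] in
theorem isLocalization_bot : IsLocalization (⊥ : Submonoid D) ↥(⊥ : Subalgebra D K) := by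
  letI : IsLocalization (⊥ : Submonoid D) D :=
    IsLocalization.at_units (S := (⊥ : Submonoid D))
      (by rintro x hx; rw [Submonoid.mem_bot] at hx; subst hx; exact isUnit_one)
  exact IsLocalization.isLocalization_of_algEquiv (⊥ : Submonoid D)
    (Algebra.botEquivOfInjective (IsFractionRing.injective D K)).symm

def botCopyEquiv (N : Submodule D K) : ↥N ≃ₗ[D] ↥(botCopy D K N) where
  toFun x := ⟨x.1, x.2⟩
  invFun x := ⟨x.1, x.2⟩
  map_add' _ _ := rfl
  map_smul' _ _ := rfl
  left_inv _ := rfl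
  right_inv _ := rfl

theorem flat_botCopy (N : Submodule D K) (h : Module.Flat D ↥N) :
    Module.Flat (⊥ : Subalgebra D K) ↥(botCopy D K N) := by
  haveI : IsLocalization (⊥ : Submonoid D) ↥(⊥ : Subalgebra D K) := isLocalization_bot D K
  haveI : Module.Flat D ↥(botCopy D K N) :=
    Module.Flat.of_linearEquiv (botCopyEquiv D K N).symm
  haveI := isLocalizedModule_id (⊥ : Submonoid D) ↥(botCopy D K N) ↥(⊥ : Subalgebra D K)
  exact Module.Flat.of_isLocalizedModule ↥(⊥ : Subalgebra D K) (⊥ : Submonoid D)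
    (LinearMap.id : ↥(botCopy D K N) →ₗ[D] ↥(botCopy D K N))

theorem mem_overEnds {N : Submodule D K} {x : K} : x ∈ overEnds D K N ↔ x ∈ N := by
  constructor
  · intro hx
    let N' : Submodule (ends D K N) K :=
      { carrier := N
        add_mem' := N.add_mem
        zero_mem' := N.zero_mem
        smul_mem' := by
          rintro c y hy
          show _ ∈ N
          rw [subalgebra_smul_def]
          exact c.2 y hy }
    exact Submodule.span_le (p := N').mpr (fun z hz => hz) hx
  · exact fun h => Submodule.subset_span h

end AuxFlat


/-- A flat nonzero fractional ideal is quasi-stable: it is flat over its endomorphism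
ring `(I : I)`. -/
theorem quasiStable_of_flat
    (D K : Type*) [CommRing D] [IsDomain D] [Field K] [Algebra D K] [IsFractionRing D K]
    (I : FractionalIdeal D⁰ K) (hI : I ≠ 0)
    (hflat : Module.Flat D (I : Submodule D K)) :
    IsQuasiStable D K (I : Submodule D K) := by
  set N : Submodule D K := (I : Submodule D K) with hN
  apply Module.Flat.of_forall_isTrivialRelation
  intro ι f x hfx
  -- coerce the relation to K
  have hK : ∑ i, (f i : K) * ((x i : K)) = 0 := by
    have h0 : ((∑ i, f i • x i : overEnds D K N) : K) = 0 := by rw [hfx]; rfl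
    rw [Submodule.coe_sum] at h0
    simpa only [SetLike.val_smul, subalgebra_smul_def] using h0
  -- clear denominators
  obtain ⟨b, hb⟩ := IsLocalization.exist_integer_multiples (D⁰) Finset.univ
    (fun i : Fin ι => (f i : K))
  choose g hg using fun i => hb i (Finset.mem_univ i)
  -- the relation over the bottom subalgebra
  have memb : ∀ i, algebraMap D K (g i) ∈ (⊥ : Subalgebra D K) := fun i => by
    rw [Algebra.mem_bot]; exact ⟨g i, rfl⟩
  set c : Fin ι → ↥(⊥ : Subalgebra D K) := fun i => ⟨algebraMap D K (g i), memb i⟩ with hc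
  set x' : Fin ι → ↥(botCopy D K N) := fun i => ⟨(x i : K), (mem_overEnds D K).mp (x i).2⟩ with hx'
  have hrel : ∑ i, c i • x' i = 0 := by
    apply Subtype.ext
    rw [Submodule.coe_sum]
    simp only [SetLike.val_smul, subalgebra_smul_def, hc, hx']
    calc ∑ i, algebraMap D K (g i) * (x i : K)
        = ∑ i, (b : D) • ((f i : K) * (x i : K)) := by
          refine Finset.sum_congr rfl fun i _ => ?_
          rw [hg i, Algebra.smul_def, Algebra.smul_def, mul_assoc]
      _ = (b : D) • ∑ i, (f i : K) * (x i : K) := (Finset.smul_sum).symm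
      _ = 0 := by rw [hK, smul_zero]
  haveI := flat_botCopy D K N hflat
  obtain ⟨κ, a, y, hxa, hay⟩ := Module.Flat.isTrivialRelation_of_sum_smul_eq_zero hrel
  -- lift to the endomorphism ring
  have mema : ∀ i j, ((a i j : K)) ∈ ends D K N := by
    intro i j
    have := (a i j).2
    rw [Algebra.mem_bot] at this
    obtain ⟨d, hd⟩ := this
    intro z hz
    rw [← hd, ← Algebra.smul_def]
    exact N.smul_mem d hz
  refine ⟨κ, fun i j => ⟨(a i j : K), mema i j⟩,
    fun j => ⟨(y j : K), (mem_overEnds D K).mpr (y j).2⟩, fun i => ?_, fun j => ?_⟩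
  · apply Subtype.ext
    have h1 : ((x' i : ↥(botCopy D K N)) : K) = ∑ j, (a i j : K) * (y j : K) := by
      rw [hxa i, Submodule.coe_sum]
      simp only [SetLike.val_smul, subalgebra_smul_def]
    show (x i : K) = _
    rw [show ((x' i : ↥(botCopy D K N)) : K) = (x i : K) from rfl] at h1
    rw [h1, Submodule.coe_sum]
    simp only [SetLike.val_smul, subalgebra_smul_def]
  · apply Subtype.ext
    have h2 : ∑ i, (c i : K) * (a i j : K) = 0 := by
      have := congrArg (Subtype.val) (hay j)
      simpa using this
    have h3 : (b : D) • ∑ i, (f i : K) * (a i j : K) = 0 := by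
      rw [Finset.smul_sum, ← h2]
      refine Finset.sum_congr rfl fun i _ => ?_
      show (b : D) • ((f i : K) * _) = _
      rw [← smul_mul_assoc, ← hg i]
    have hb0 : algebraMap D K (b : D) ≠ 0 := by
      have : (b : D) ≠ 0 := nonZeroDivisors.coe_ne_zero b
      simpa using fun h => this (IsFractionRing.injective D K (by rw [h, map_zero]))
    have h4 : ∑ i, (f i : K) * (a i j : K) = 0 := by
      rw [Algebra.smul_def] at h3
      exact (mul_eq_zero.mp h3).resolve_left hb0
    show (∑ i, f i * ⟨(a i j : K), mema i j⟩ : ends D K N).val = (0 : K)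
    rw [← h4]
    push_cast
    rfl
end

section
/- Let D be an integral domain and I a nonzero fractional ideal of D that is flat as a D-module. Then I is a t-ideal of the ring (I:I), i.e., I equals its t-closure computed with respect to (I:I). -/
open scoped nonZeroDivisors

section
variable (D K : Type*) [CommRing D] [IsDomain D] [Field K] [Algebra D K] [IsFractionRing D K]

/-- The `t`-closure of a submodule of `K` over a subalgebra `S` of `K`:
the union of `(S : (S : F))` over finitely generated `S`-submodules `F ≤ J`. -/
noncomputable def tClosureOver (S : Subalgebra D K) (J : Submodule S K) : Submodule S K :=
  ⨆ F : {F : Submodule S K // F ≤ J ∧ F.FG},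
    (1 / (1 / (F : Submodule S K)) : Submodule S K)

end

section Aux

open TensorProduct

variable {D K : Type*} [CommRing D] [IsDomain D] [Field K] [Algebra D K] [IsFractionRing D K]

/-- The multiplication map `N ⊗ K → K`. -/
noncomputable def mulTens (N : Submodule D K) : (↥N) ⊗[D] K →ₗ[D] K :=
  TensorProduct.lift ((LinearMap.mul D K).comp N.subtype)

@[simp] lemma mulTens_tmul (N : Submodule D K) (x : N) (k : K) :
    mulTens N (x ⊗ₜ k) = (x : K) * k := rfl

lemma mulTens_exists_rep (N : Submodule D K) (t : (↥N) ⊗[D] K) :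
    ∃ (y : N) (b : D), b ≠ 0 ∧ t = y ⊗ₜ (algebraMap D K b)⁻¹ := by
  have hinj : Function.Injective (algebraMap D K) := IsFractionRing.injective D K
  induction t with
  | zero => exact ⟨0, 1, one_ne_zero, by simp⟩
  | tmul x k =>
    obtain ⟨a, b, hb, hab⟩ := IsFractionRing.div_surjective (A := D) k
    refine ⟨a • x, b, nonZeroDivisors.ne_zero hb, ?_⟩
    rw [TensorProduct.smul_tmul, ← hab, div_eq_mul_inv, ← Algebra.smul_def]
  | add t1 t2 ih1 ih2 =>
    obtain ⟨y1, b1, hb1, rfl⟩ := ih1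
    obtain ⟨y2, b2, hb2, rfl⟩ := ih2
    have hβ1 : algebraMap D K b1 ≠ 0 := fun h => hb1 (hinj (by simpa using h))
    have hβ2 : algebraMap D K b2 ≠ 0 := fun h => hb2 (hinj (by simpa using h))
    refine ⟨b2 • y1 + b1 • y2, b1 * b2, mul_ne_zero hb1 hb2, ?_⟩
    have h1 : (algebraMap D K b1)⁻¹ = b2 • (algebraMap D K (b1 * b2))⁻¹ := by
      rw [Algebra.smul_def, map_mul, mul_inv]
      field_simp
    have h2 : (algebraMap D K b2)⁻¹ = b1 • (algebraMap D K (b1 * b2))⁻¹ := by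
      rw [Algebra.smul_def, map_mul, mul_inv]
      field_simp
    rw [h1, h2, TensorProduct.add_tmul, ← TensorProduct.smul_tmul, ← TensorProduct.smul_tmul]

lemma mulTens_injective (N : Submodule D K) : Function.Injective (mulTens N) := by
  rw [← LinearMap.ker_eq_bot (R := D) (M := ↥N ⊗[D] K) (M₂ := K) (τ₁₂ := RingHom.id D) (f := mulTens N), eq_bot_iff]
  intro t ht
  obtain ⟨y, b, hb, rfl⟩ := mulTens_exists_rep N t
  have hβ : algebraMap D K b ≠ 0 :=
    fun h => hb (IsFractionRing.injective D K (by simpa using h))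
  have h0 : (y : K) * (algebraMap D K b)⁻¹ = 0 := ht
  have hy : (y : K) = 0 := by
    rcases mul_eq_zero.mp h0 with h | h
    · exact h
    · exact absurd h (inv_ne_zero hβ)
  have hy' : y = 0 := Subtype.ext hy
  simp [hy']

/-- The multiplication map `N ⊗ A → K`. -/
noncomputable def mulOf (N A : Submodule D K) : (↥N) ⊗[D] (↥A) →ₗ[D] K :=
  (mulTens N).comp (LinearMap.lTensor ↥N A.subtype)

lemma mulOf_mem (N A : Submodule D K) (t : (↥N) ⊗[D] (↥A)) : mulOf N A t ∈ N * A := by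
  induction t with
  | zero => simpa using (N * A).zero_mem
  | tmul x a =>
    have h : mulOf N A (x ⊗ₜ a) = (x : K) * (a : K) := rfl
    rw [h]
    exact Submodule.mul_mem_mul x.2 a.2
  | add t1 t2 ih1 ih2 =>
    rw [map_add]
    exact (N * A).add_mem ih1 ih2

lemma exists_mulOf (N A : Submodule D K) {z : K} (hz : z ∈ N * A) :
    ∃ t, mulOf N A t = z := by
  refine Submodule.mul_induction_on hz ?_ ?_
  · intro x hx a ha
    exact ⟨⟨x, hx⟩ ⊗ₜ ⟨a, ha⟩, rfl⟩
  · rintro z1 z2 ⟨t1, rfl⟩ ⟨t2, rfl⟩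
    exact ⟨t1 + t2, map_add _ _ _⟩

/-- Key flatness lemma: for a flat submodule `N` of `K`,
multiplication distributes over intersections. -/
lemma flat_mul_inf (N A B : Submodule D K) (hN : Module.Flat D ↥N) :
    N * A ⊓ N * B ≤ N * (A ⊓ B) := by
  haveI := hN
  intro z hz
  obtain ⟨u, hu⟩ := exists_mulOf N A hz.1
  obtain ⟨v, hv⟩ := exists_mulOf N B hz.2
  set f : ↥(A ⊓ B) →ₗ[D] ↥A × ↥B :=
    (Submodule.inclusion (inf_le_left : A ⊓ B ≤ A)).prod
      (Submodule.inclusion (inf_le_right : A ⊓ B ≤ B)) with hf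
  set g : ↥A × ↥B →ₗ[D] K :=
    A.subtype.comp (LinearMap.fst D ↥A ↥B) - B.subtype.comp (LinearMap.snd D ↥A ↥B) with hg
  have hexact : Function.Exact f g := by
    intro y
    constructor
    · intro hy
      have hy' : (y.1 : K) = (y.2 : K) := by
        have h0 : (y.1 : K) - (y.2 : K) = 0 := hy
        exact sub_eq_zero.mp h0
      refine ⟨⟨(y.1 : K), ⟨y.1.2, hy' ▸ y.2.2⟩⟩, ?_⟩
      exact Prod.ext (Subtype.ext rfl) (Subtype.ext hy')
    · rintro ⟨x, rfl⟩
      show (g.comp f) x = 0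
      simp [hf, hg, LinearMap.sub_apply]
  have hex2 := Module.Flat.lTensor_exact (M := ↥N) hexact
  set e := TensorProduct.prodRight D D ↥N ↥A ↥B with he
  set w := e.symm (u, v) with hw
  have hew : e w = (u, v) := e.apply_symm_apply (u, v)
  have hL1 : (A.subtype.comp (LinearMap.fst D ↥A ↥B)).lTensor ↥N
      = (A.subtype.lTensor ↥N).comp
          ((LinearMap.fst D _ _).comp e.toLinearMap) := by
    apply TensorProduct.ext'
    intro x y
    obtain ⟨a, b⟩ := y
    simp [he]
  have hL2 : (B.subtype.comp (LinearMap.snd D ↥A ↥B)).lTensor ↥N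
      = (B.subtype.lTensor ↥N).comp
          ((LinearMap.snd D _ _).comp e.toLinearMap) := by
    apply TensorProduct.ext'
    intro x y
    obtain ⟨a, b⟩ := y
    simp [he]
  have hg0 : g.lTensor ↥N w = 0 := by
    apply mulTens_injective N
    rw [map_zero]
    rw [hg, LinearMap.lTensor_sub, LinearMap.sub_apply (M := ↥N ⊗[D] (↥A × ↥B)) (N₂ := ↥N ⊗[D] K) (σ₁₂ := RingHom.id D), map_sub (mulTens N), hL1, hL2]
    simp only [LinearMap.comp_apply, LinearEquiv.coe_coe, hew]
    show mulOf N A u - mulOf N B v = 0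
    rw [hu, hv, sub_self]
  obtain ⟨w', hw'⟩ := (hex2 w).mp hg0
  have hL3 : (LinearMap.fst D (↥N ⊗[D] ↥A) (↥N ⊗[D] ↥B)).comp
        (e.toLinearMap.comp (f.lTensor ↥N))
      = (Submodule.inclusion (inf_le_left : A ⊓ B ≤ A)).lTensor ↥N := by
    apply TensorProduct.ext'
    intro x y
    simp [he, hf, LinearMap.prod_apply]
  have hu' : u = (Submodule.inclusion (inf_le_left : A ⊓ B ≤ A)).lTensor ↥N w' := by
    have h1 : (e w).1 = u := by rw [hew]
    rw [← h1, ← hw', ← hL3]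
    rfl
  have hz' : z = mulOf N (A ⊓ B) w' := by
    rw [← hu, hu']
    show mulTens N ((A.subtype.lTensor ↥N)
      (((Submodule.inclusion (inf_le_left : A ⊓ B ≤ A)).lTensor ↥N) w')) = _
    rw [← LinearMap.lTensor_comp_apply, Submodule.subtype_comp_inclusion]
    rfl
  rw [hz']
  exact mulOf_mem N (A ⊓ B) w'

/-- `N`, which is stable under its endomorphism ring, as a submodule over `ends D K N`. -/
def asOver (N : Submodule D K) : Submodule (ends D K N) K where
  carrier := N
  add_mem' := fun ha hb => N.add_mem ha hb
  zero_mem' := N.zero_mem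
  smul_mem' := fun s x hx => by
    have h : s • x = (s : K) * x := rfl
    rw [h]
    exact s.2 x hx

@[simp] lemma mem_asOver {N : Submodule D K} {x : K} : x ∈ asOver N ↔ x ∈ N := Iff.rfl

lemma overEnds_eq (N : Submodule D K) : overEnds D K N = asOver N := by
  apply le_antisymm
  · exact Submodule.span_le.mpr (fun x hx => hx)
  · intro x hx
    exact Submodule.subset_span hx

lemma mem_one_subalgebra {S : Subalgebra D K} {x : K} :
    x ∈ (1 : Submodule S K) ↔ x ∈ S := by
  rw [Submodule.mem_one]
  constructor
  · rintro ⟨y, rfl⟩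
    exact y.2
  · intro hx
    exact ⟨⟨x, hx⟩, rfl⟩

end Aux

/-- A flat nonzero fractional ideal `I` of `D` is a `t`-ideal of its endomorphism ring
`(I : I)`. -/
theorem flat_is_tIdeal_of_endRing
    (D K : Type*) [CommRing D] [IsDomain D] [Field K] [Algebra D K] [IsFractionRing D K]
    (I : FractionalIdeal D⁰ K) (hI : I ≠ 0)
    (hflat : Module.Flat D (I : Submodule D K)) :
    tClosureOver D K (ends D K (I : Submodule D K)) (overEnds D K (I : Submodule D K))
      = overEnds D K (I : Submodule D K) := by
  classical
  set N : Submodule D K := (I : Submodule D K) with hNdef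
  set S : Subalgebra D K := ends D K N with hSdef
  have hNbot : N ≠ ⊥ := by
    intro h
    exact hI (FractionalIdeal.coeToSubmodule_eq_bot.mp h)
  obtain ⟨y0, hy0N, hy0⟩ := Submodule.exists_mem_ne_zero_of_ne_bot hNbot
  rw [overEnds_eq]
  apply le_antisymm
  · -- hard direction
    refine iSup_le ?_
    rintro ⟨F, hFle, hFfg⟩
    obtain ⟨s, hs⟩ := hFfg
    have hsN : ∀ a ∈ s, a ∈ N := by
      intro a ha
      exact hFle (hs ▸ Submodule.subset_span ha)
    -- the intersection of the "division by a" submodules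
    set Sdiv : K → Submodule D K := fun a =>
      { carrier := {x | a * x ∈ Subalgebra.toSubmodule S}
        add_mem' := fun {p q} hp hq => by
          simp only [Set.mem_setOf_eq, mul_add]
          exact add_mem hp hq
        zero_mem' := by
          simp only [Set.mem_setOf_eq, mul_zero]
          exact Submodule.zero_mem _
        smul_mem' := fun d x hx => by
          simp only [Set.mem_setOf_eq, mul_smul_comm]
          exact Submodule.smul_mem _ d hx } with hSdiv
    have key : ∀ t : Finset K, (∀ a ∈ t, a ∈ N) → (1 : K) ∈ N * (⨅ a ∈ t, Sdiv a) := by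
      intro t
      induction t using Finset.induction_on with
      | empty =>
        intro _
        have htop : (⨅ a ∈ (∅ : Finset K), Sdiv a) = ⊤ := by simp
        rw [htop]
        have h1 : y0 * y0⁻¹ = 1 := mul_inv_cancel₀ hy0
        rw [← h1]
        exact Submodule.mul_mem_mul hy0N Submodule.mem_top
      | insert a t' hnotmem ih =>
        intro hmem
        rw [Finset.iInf_insert]
        have h1t : (1 : K) ∈ N * (⨅ b ∈ t', Sdiv b) :=
          ih (fun b hb => hmem b (Finset.mem_insert_of_mem hb))
        have h1a : (1 : K) ∈ N * Sdiv a := by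
          by_cases ha : a = 0
          · have : y0⁻¹ ∈ Sdiv a := by
              show a * y0⁻¹ ∈ Subalgebra.toSubmodule S
              rw [ha, zero_mul]
              exact zero_mem _
            have h1 : y0 * y0⁻¹ = 1 := mul_inv_cancel₀ hy0
            rw [← h1]
            exact Submodule.mul_mem_mul hy0N this
          · have haN : a ∈ N := hmem a (Finset.mem_insert_self a t')
            have hainv : a⁻¹ ∈ Sdiv a := by
              show a * a⁻¹ ∈ Subalgebra.toSubmodule S
              rw [mul_inv_cancel₀ ha]
              exact (Subalgebra.mem_toSubmodule S).mpr S.one_mem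
            have h1 : a * a⁻¹ = 1 := mul_inv_cancel₀ ha
            rw [← h1]
            exact Submodule.mul_mem_mul haN hainv
        exact flat_mul_inf N (Sdiv a) (⨅ b ∈ t', Sdiv b) hflat ⟨h1a, h1t⟩
    have h1 := key s hsN
    intro x hx
    -- hx : x ∈ 1 / (1 / F); goal : x ∈ asOver N
    rw [mem_asOver]
    have main : ∀ z ∈ N * (⨅ a ∈ s, Sdiv a), x * z ∈ N := by
      intro z hz
      refine Submodule.mul_induction_on hz ?_ ?_
      · intro y hy t ht
        have ht' : ∀ a ∈ s, a * t ∈ S := by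
          intro a ha
          have := (Submodule.mem_iInf _).mp ht a
          exact (Submodule.mem_iInf _).mp this ha
        have htF : t ∈ (1 / F : Submodule S K) := by
          rw [Submodule.mem_div_iff_forall_mul_mem]
          intro z' hz'
          rw [← hs] at hz'
          refine Submodule.span_induction ?_ ?_ ?_ ?_ hz'
          · intro a ha
            rw [mul_comm]
            exact mem_one_subalgebra.mpr (ht' a ha)
          · simp
          · intro p q _ _ hp hq
            rw [mul_add]
            exact add_mem hp hq
          · intro c p _ hp
            rw [mul_smul_comm]
            exact Submodule.smul_mem _ c hp
        have hxt : x * t ∈ S := by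
          have := Submodule.mem_div_iff_forall_mul_mem.mp hx t htF
          exact mem_one_subalgebra.mp this
        have heq : x * (y * t) = (x * t) * y := by ring
        rw [heq]
        exact hxt y hy
      · intro z1 z2 hz1 hz2
        rw [mul_add]
        exact N.add_mem hz1 hz2
    have := main 1 h1
    simpa using this
  · -- easy direction
    intro x hx
    rw [mem_asOver] at hx
    have hxF : x ∈ (1 / (1 / (Submodule.span S {x} : Submodule S K)) : Submodule S K) := by
      rw [Submodule.mem_div_iff_forall_mul_mem]
      intro y hy
      rw [Submodule.mem_div_iff_forall_mul_mem] at hy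
      have := hy x (Submodule.mem_span_singleton_self x)
      rwa [mul_comm]
    refine Submodule.mem_iSup_of_mem
      ⟨Submodule.span S {x}, ?_, Submodule.fg_span_singleton x⟩ hxF
    rw [Submodule.span_singleton_le_iff_mem]
    exact hx
end

section
/- Let D be an integral domain, T an overring of D, and I a nonzero fractional ideal of D that is quasi-stable (flat over (I:I)). Then IT is a quasi-stable ideal of T, i.e., IT is flat as a module over (IT : IT). -/
open scoped nonZeroDivisors

open scoped TensorProduct
set_option maxHeartbeats 4000000
set_option synthInstance.maxHeartbeats 1000000

theorem isQuasiStable_mul_toSubmodule (D K : Type*) [CommRing D] [IsDomain D] [Field K] [Algebra D K]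
    [IsFractionRing D K] (N : Submodule D K) (T : Subalgebra D K)
    (hqs : IsQuasiStable D K N) :
    IsQuasiStable D K (N * Subalgebra.toSubmodule T) := by
  classical
  set N' : Submodule D K := N * Subalgebra.toSubmodule T with hN'def
  -- T ⊆ ends N'
  have hT : ∀ t ∈ T, t ∈ ends D K N' := by
    intro t ht y hy
    refine Submodule.mul_induction_on hy (fun n hn t' ht' => ?_) (fun a b ha hb => ?_)
    · have : t * (n * t') = n * (t * t') := by ring
      rw [this]
      exact Submodule.mul_mem_mul hn
        ((Subalgebra.mem_toSubmodule T).mpr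
          (mul_mem ht ((Subalgebra.mem_toSubmodule T).mp ht')))
    · rw [mul_add]; exact add_mem ha hb
  have hNN' : N ≤ N' := by
    intro n hn
    have := Submodule.mul_mem_mul hn ((Subalgebra.mem_toSubmodule T).mpr (one_mem T))
    rwa [mul_one] at this
  have hEE' : ends D K N ≤ ends D K N' := by
    intro x hx y hy
    refine Submodule.mul_induction_on hy (fun n hn t' ht' => ?_) (fun a b ha hb => ?_)
    · have : x * (n * t') = (x * n) * t' := by ring
      rw [this]; exact Submodule.mul_mem_mul (hx n hn) ht'
    · rw [mul_add]; exact add_mem ha hb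
  letI : Algebra (ends D K N) (ends D K N') := (Subalgebra.inclusion hEE').toAlgebra
  haveI : IsScalarTower (ends D K N) (ends D K N') K :=
    IsScalarTower.of_algebraMap_smul fun e k => rfl
  haveI hflat : Module.Flat (ends D K N) (overEnds D K N) := hqs
  set M := overEnds D K N with hMdef
  set M' := overEnds D K N' with hM'def
  set f : M →ₗ[ends D K N] K := M.subtype with hfdef
  set μ : (ends D K N') ⊗[ends D K N] M →ₗ[ends D K N'] K :=
    f.liftBaseChange (ends D K N') with hμdef
  set ν : K ⊗[ends D K N] M →ₗ[K] K := f.liftBaseChange K with hνdef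
  -- every element of K ⊗ M is a pure tensor
  have hrep : ∀ w : K ⊗[ends D K N] M, ∃ (c : K) (m : M), w = c ⊗ₜ m := by
    intro w
    induction w using TensorProduct.induction_on with
    | zero => exact ⟨0, 0, (TensorProduct.zero_tmul _ _).symm⟩
    | tmul k m => exact ⟨k, m, rfl⟩
    | add x y hx hy =>
      obtain ⟨c1, m1, rfl⟩ := hx
      obtain ⟨c2, m2, rfl⟩ := hy
      obtain ⟨a1, b1, hb1, rfl⟩ := IsFractionRing.div_surjective (A := D) c1
      obtain ⟨a2, b2, hb2, rfl⟩ := IsFractionRing.div_surjective (A := D) c2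
      have hb1' : algebraMap D K b1 ≠ 0 :=
        IsFractionRing.to_map_ne_zero_of_mem_nonZeroDivisors hb1
      have hb2' : algebraMap D K b2 ≠ 0 :=
        IsFractionRing.to_map_ne_zero_of_mem_nonZeroDivisors hb2
      set e1 : ends D K N := ⟨algebraMap D K (a1 * b2), (ends D K N).algebraMap_mem _⟩
      set e2 : ends D K N := ⟨algebraMap D K (a2 * b1), (ends D K N).algebraMap_mem _⟩
      refine ⟨(algebraMap D K (b1 * b2))⁻¹, e1 • m1 + e2 • m2, ?_⟩
      have key : ∀ (e : ends D K N) (c : K) (m : M),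
          (c ⊗ₜ[ends D K N] (e • m) : K ⊗[ends D K N] M) = ((e : K) * c) ⊗ₜ m := by
        intro e c m
        rw [TensorProduct.tmul_smul, TensorProduct.smul_tmul']
        congr 1
      rw [TensorProduct.tmul_add, key, key]
      congr 2
      · field_simp
        show _ = _ * algebraMap D K (a1 * b2)
        simp only [map_mul]
        ring
      · field_simp
        show _ = _ * algebraMap D K (a2 * b1)
        simp only [map_mul]
        ring
  -- ν is injective
  have hν : Function.Injective ν := by
    have h0 : ∀ w, ν w = 0 → w = 0 := by
      intro w hw
      obtain ⟨c, m, rfl⟩ := hrep w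
      have h2 : c = 0 ∨ f m = 0 := by
        simpa [hνdef, LinearMap.liftBaseChange_tmul, smul_eq_mul, mul_eq_zero] using hw
      rcases h2 with hc | hm
      · rw [hc, TensorProduct.zero_tmul]
      · have : m = 0 := Subtype.ext hm
        rw [this, TensorProduct.tmul_zero]
    intro a b hab
    have := h0 (a - b) (by rw [map_sub, hab, sub_self])
    exact sub_eq_zero.mp this
  -- the inclusion of ends N' into K, as an (ends N)-linear map
  set ι : (ends D K N') →ₗ[ends D K N] K :=
    { toFun := fun x => (x : K)
      map_add' := fun a b => rfl
      map_smul' := fun e x => rfl } with hιdef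
  have hj : Function.Injective (LinearMap.rTensor M ι) :=
    Module.Flat.rTensor_preserves_injective_linearMap ι Subtype.val_injective
  have hcomp : ∀ z, ν (LinearMap.rTensor M ι z) = μ z := by
    intro z
    induction z using TensorProduct.induction_on with
    | zero => simp
    | tmul x m =>
      rw [LinearMap.rTensor_tmul]
      rfl
    | add x y hx hy => rw [map_add, map_add, map_add, hx, hy]
  have hμ : Function.Injective μ := by
    intro a b hab
    exact hj (hν (by rw [hcomp, hcomp, hab]))
  -- M ⊆ M'
  have hMsub : ∀ k : K, k ∈ M → k ∈ M' := by
    intro k hk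
    refine Submodule.span_induction (fun x hx => ?_) ?_ (fun x y _ _ hx hy => ?_)
      (fun e x _ hx => ?_) hk
    · exact Submodule.subset_span (hNN' hx)
    · exact zero_mem M'
    · exact add_mem hx hy
    · have : e • x = (⟨(e : K), hEE' e.2⟩ : ends D K N') • x := rfl
      rw [this]
      exact M'.smul_mem _ hx
  have hmem : ∀ z, μ z ∈ M' := by
    intro z
    induction z using TensorProduct.induction_on with
    | zero => rw [map_zero]; exact zero_mem M'
    | tmul x m =>
      rw [hμdef, LinearMap.liftBaseChange_tmul]
      exact M'.smul_mem x (hMsub _ m.2)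
    | add x y hx hy => rw [map_add]; exact add_mem hx hy
  set μ' : (ends D K N') ⊗[ends D K N] M →ₗ[ends D K N'] M' :=
    μ.codRestrict M' hmem with hμ'def
  have hinj' : Function.Injective μ' := by
    intro a b hab
    exact hμ (by simpa [hμ'def, Subtype.ext_iff] using hab)
  have hrange : (N' : Set K) ⊆ (LinearMap.range μ : Submodule (ends D K N') K) := by
    intro k hk
    refine Submodule.mul_induction_on hk (fun n hn t ht => ?_) (fun a b ha hb => ?_)
    · refine ⟨(⟨t, hT t ((Subalgebra.mem_toSubmodule T).mp ht)⟩ : ends D K N') ⊗ₜ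
        (⟨n, Submodule.subset_span hn⟩ : M), ?_⟩
      rw [hμdef, LinearMap.liftBaseChange_tmul]
      show t * n = n * t
      ring
    · exact add_mem ha hb
  have hsurj' : Function.Surjective μ' := by
    intro y
    have hy : (y : K) ∈ Submodule.span (ends D K N') (N' : Set K) := y.2
    have : (y : K) ∈ LinearMap.range μ :=
      Submodule.span_le.mpr hrange hy
    obtain ⟨z, hz⟩ := this
    exact ⟨z, Subtype.ext (by simpa [hμ'def] using hz)⟩
  have eqv : ((ends D K N') ⊗[ends D K N] M) ≃ₗ[ends D K N'] M' :=
    LinearEquiv.ofBijective μ' ⟨hinj', hsurj'⟩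
  haveI : Module.Flat (ends D K N') ((ends D K N') ⊗[ends D K N] M) :=
    Module.Flat.baseChange _ _ _
  have hfin : Module.Flat (ends D K N') M' := Module.Flat.of_linearEquiv eqv.symm
  exact hfin


/-- If `I` is a quasi-stable nonzero fractional ideal of `D` and `T` an overring of `D`,
then `IT` is a quasi-stable ideal of `T` (flat over its endomorphism ring `(IT : IT)`). -/
theorem quasiStable_extension_to_overring
    (D K : Type*) [CommRing D] [IsDomain D] [Field K] [Algebra D K] [IsFractionRing D K]
    (I : FractionalIdeal D⁰ K) (hI : I ≠ 0)
    (T : Subalgebra D K)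
    (hqs : IsQuasiStable D K (I : Submodule D K)) :
    IsQuasiStable D K ((I : Submodule D K) * Subalgebra.toSubmodule T) :=
  isQuasiStable_mul_toSubmodule D K (I : Submodule D K) T hqs
end

section
/- Let D be an integral domain and T an overring of D such that every nonzero fractional ideal of T is of the form IT for some nonzero fractional ideal I of D. If D is quasi-stable (every nonzero fractional ideal of D is flat over its endomorphism ring), then T is quasi-stable. -/
open scoped nonZeroDivisors

open TensorProduct in
set_option synthInstance.maxHeartbeats 1000000 in
set_option maxHeartbeats 1000000 in
/-- If `T` is an overring of `D` such that every nonzero fractional ideal of `T` is the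
extension `IT` of some nonzero fractional ideal `I` of `D`, and `D` is quasi-stable,
then `T` is quasi-stable. -/
theorem quasiStable_overring_of_surjective_extension
    (D K : Type*) [CommRing D] [IsDomain D] [Field K] [Algebra D K] [IsFractionRing D K]
    (T : Subalgebra D K)
    (hsurj : ∀ J : Submodule T K, J ≠ ⊥ → IsFractional (↥T)⁰ J →
      ∃ I : FractionalIdeal D⁰ K, I ≠ 0 ∧
        Submodule.span T ((I : Submodule D K) : Set K) = J)
    (hD : ∀ I : FractionalIdeal D⁰ K, I ≠ 0 → IsQuasiStable D K (I : Submodule D K)) :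
    ∀ J : Submodule T K, J ≠ ⊥ → IsFractional (↥T)⁰ J →
      IsQuasiStable D K (J.restrictScalars D) := by
  intro J hJ hJf
  obtain ⟨I, hI0, hspan⟩ := hsurj J hJ hJf
  classical
  set N : Submodule D K := J.restrictScalars D with hNdef
  -- membership in N is membership in J
  have hNJ : ∀ x : K, x ∈ N ↔ x ∈ J := fun x => Iff.rfl
  -- I ⊆ N
  have hIN : ((I : Submodule D K) : Set K) ⊆ (N : Set K) := by
    intro x hx
    have : x ∈ Submodule.span T ((I : Submodule D K) : Set K) := Submodule.subset_span hx
    rw [hspan] at this; exact this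
  -- T ⊆ ends N
  have hTE : ∀ t : T, (t : K) ∈ ends D K N := by
    intro t y hy
    have h1 : (t : K) * y = t • y := by rw [Algebra.smul_def]; rfl
    rw [hNJ] at hy ⊢
    rw [h1]
    exact J.smul_mem t hy
  -- ends I ≤ ends N
  have hle : ends D K (I : Submodule D K) ≤ ends D K N := by
    intro x hx
    intro y hy
    rw [hNJ] at hy ⊢
    rw [← hspan] at hy ⊢
    induction hy using Submodule.span_induction with
    | mem z hz => exact Submodule.subset_span (hx z hz)
    | zero => rw [mul_zero]; exact Submodule.zero_mem _
    | add a b _ _ ha hb => rw [mul_add]; exact Submodule.add_mem _ ha hb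
    | smul t z hz hxz =>
        have h1 : x * (t • z) = t • (x * z) := by
          rw [Algebra.smul_def, Algebra.smul_def]; show x * ((t : K) * z) = (t : K) * (x * z)
          ring
        rw [h1]
        exact Submodule.smul_mem _ t hxz
  letI : Algebra (ends D K (I : Submodule D K)) (ends D K N) :=
    (Subalgebra.inclusion hle).toRingHom.toAlgebra
  haveI : IsScalarTower (ends D K (I : Submodule D K)) (ends D K N) K :=
    IsScalarTower.of_algebraMap_smul (fun r x => by
      show (Subalgebra.inclusion hle r : K) * x = r • x
      rfl)
  haveI hflat : Module.Flat (ends D K (I : Submodule D K))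
      (overEnds D K (I : Submodule D K)) := hD I hI0
  -- the multiplication maps
  set g : overEnds D K (I : Submodule D K) →ₗ[ends D K (I : Submodule D K)] K :=
    (overEnds D K (I : Submodule D K)).subtype with hgdef
  set μ : (ends D K N) ⊗[ends D K (I : Submodule D K)] (overEnds D K (I : Submodule D K))
      →ₗ[ends D K N] K := g.liftBaseChange (ends D K N) with hμdef
  set ν : K ⊗[ends D K (I : Submodule D K)] (overEnds D K (I : Submodule D K))
      →ₗ[K] K := g.liftBaseChange K with hνdef
  -- ν is injective
  have hsm : ∀ (b : ends D K (I : Submodule D K)) (m : overEnds D K (I : Submodule D K)),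
      (b : K) • ((1 : K) ⊗ₜ[ends D K (I : Submodule D K)] m)
        = (1 : K) ⊗ₜ[ends D K (I : Submodule D K)] (b • m) := by
    intro b m
    rw [TensorProduct.smul_tmul', ← TensorProduct.smul_tmul]
    congr 1
  have hkey : ∀ x : K ⊗[ends D K (I : Submodule D K)] (overEnds D K (I : Submodule D K)),
      ∃ (b : ends D K (I : Submodule D K)) (m : overEnds D K (I : Submodule D K)),
        (b : K) ≠ 0 ∧ (b : K) • x = (1 : K) ⊗ₜ[ends D K (I : Submodule D K)] m := by
    intro x
    induction x using TensorProduct.induction_on with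
    | zero =>
        refine ⟨1, 0, one_ne_zero, ?_⟩
        rw [smul_zero, TensorProduct.tmul_zero]
    | tmul k m =>
        obtain ⟨a, d, hd, hk⟩ := IsFractionRing.div_surjective (A := D) k
        have hdne : algebraMap D K d ≠ 0 :=
          IsFractionRing.to_map_ne_zero_of_mem_nonZeroDivisors hd
        refine ⟨⟨algebraMap D K d, Subalgebra.algebraMap_mem _ d⟩,
          (⟨algebraMap D K a, Subalgebra.algebraMap_mem _ a⟩ :
            ends D K (I : Submodule D K)) • m, hdne, ?_⟩
        have h1 : (algebraMap D K d) • (k ⊗ₜ[ends D K (I : Submodule D K)] m)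
            = (algebraMap D K a) ⊗ₜ[ends D K (I : Submodule D K)] m := by
          rw [TensorProduct.smul_tmul', smul_eq_mul, ← hk, mul_div_cancel₀ _ hdne]
        have h2 : (algebraMap D K a) ⊗ₜ[ends D K (I : Submodule D K)] m
            = ((⟨algebraMap D K a, Subalgebra.algebraMap_mem _ a⟩ :
                ends D K (I : Submodule D K)) : K) •
              ((1 : K) ⊗ₜ[ends D K (I : Submodule D K)] m) := by
          rw [TensorProduct.smul_tmul', smul_eq_mul, mul_one]
        show (algebraMap D K d) • (k ⊗ₜ[ends D K (I : Submodule D K)] m) = _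
        rw [h1, h2, hsm]
    | add x y hx hy =>
        obtain ⟨b₁, m₁, hb₁, h₁⟩ := hx
        obtain ⟨b₂, m₂, hb₂, h₂⟩ := hy
        refine ⟨b₁ * b₂, b₂ • m₁ + b₁ • m₂, ?_, ?_⟩
        · show (b₁ : K) * (b₂ : K) ≠ 0
          exact mul_ne_zero hb₁ hb₂
        · have hc : ((b₁ * b₂ : ends D K (I : Submodule D K)) : K) = (b₁ : K) * (b₂ : K) := rfl
          rw [hc, smul_add, mul_smul, mul_smul, smul_comm ((b₁ : K)) ((b₂ : K)) x, h₁, h₂,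
            hsm, hsm, ← TensorProduct.tmul_add]
  have hνinj : Function.Injective ν := by
    rw [injective_iff_map_eq_zero]
    intro x hx
    obtain ⟨b, m, hb, hbm⟩ := hkey x
    have h1 : ν ((b : K) • x) = 0 := by rw [map_smul, hx, smul_zero]
    rw [hbm] at h1
    have h2 : ν ((1 : K) ⊗ₜ[ends D K (I : Submodule D K)] m) = (m : K) := by
      rw [hνdef, LinearMap.liftBaseChange_tmul, one_smul]; rfl
    rw [h2] at h1
    have h3 : m = 0 := Subtype.ext h1
    rw [h3, TensorProduct.tmul_zero] at hbm
    calc x = (b : K)⁻¹ • ((b : K) • x) := (inv_smul_smul₀ hb x).symm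
    _ = 0 := by rw [hbm, smul_zero]
  -- the inclusion map ends I → K as E₀-linear map
  set ι : (ends D K N) →ₗ[ends D K (I : Submodule D K)] K :=
    { toFun := fun e => (e : K)
      map_add' := fun a b => rfl
      map_smul' := fun r e => rfl } with hιdef
  have hιinj : Function.Injective ι := fun a b h => Subtype.ext h
  have hcomm : ∀ x, ν (ι.rTensor (overEnds D K (I : Submodule D K)) x) = μ x := by
    intro x
    induction x using TensorProduct.induction_on with
    | zero => rw [map_zero, map_zero, map_zero]
    | tmul e m =>
        rw [LinearMap.rTensor_tmul, hνdef, hμdef, LinearMap.liftBaseChange_tmul,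
          LinearMap.liftBaseChange_tmul]
        show (e : K) • (m : K) = e • (m : K)
        rw [Algebra.smul_def (A := K) e (m : K)]
        rfl
    | add x y hx hy => rw [map_add, map_add, map_add, hx, hy]
  have hμinj : Function.Injective μ := by
    intro x y h
    have h1 := Module.Flat.rTensor_preserves_injective_linearMap
      (M := overEnds D K (I : Submodule D K)) ι hιinj
    apply h1
    apply hνinj
    rw [hcomm, hcomm, h]
  -- range of μ
  have hrange : LinearMap.range μ = overEnds D K N := by
    apply le_antisymm
    · rintro _ ⟨x, rfl⟩
      induction x using TensorProduct.induction_on with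
      | zero => rw [map_zero]; exact Submodule.zero_mem _
      | tmul e m =>
          rw [hμdef, LinearMap.liftBaseChange_tmul]
          refine Submodule.smul_mem _ e ?_
          -- m.1 ∈ span E N
          obtain ⟨mv, hm⟩ := m
          have hm' : mv ∈ Submodule.span (ends D K (I : Submodule D K))
              (((I : FractionalIdeal D⁰ K) : Submodule D K) : Set K) := hm
          show mv ∈ Submodule.span (ends D K N) (N : Set K)
          clear hm
          induction hm' using Submodule.span_induction with
          | mem z hz => exact Submodule.subset_span (hIN hz)
          | zero => exact Submodule.zero_mem _
          | add a b _ _ ha hb => exact Submodule.add_mem _ ha hb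
          | smul r z hz hrz =>
              have h1 : r • z = (⟨(r : K), hle r.2⟩ : ends D K N) • z := by
                rw [Algebra.smul_def, Algebra.smul_def]; rfl
              rw [h1]
              exact Submodule.smul_mem _ _ hrz
      | add x y hx hy => rw [map_add]; exact Submodule.add_mem _ hx hy
    · show Submodule.span (ends D K N) (N : Set K) ≤ LinearMap.range μ
      rw [Submodule.span_le]
      intro y hy
      rw [SetLike.mem_coe, hNJ, ← hspan] at hy
      induction hy using Submodule.span_induction with
      | mem z hz =>
          refine ⟨(1 : ends D K N) ⊗ₜ[ends D K (I : Submodule D K)]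
            ⟨z, Submodule.subset_span hz⟩, ?_⟩
          rw [hμdef, LinearMap.liftBaseChange_tmul, one_smul]
          rfl
      | zero => exact Submodule.zero_mem _
      | add a b _ _ ha hb => exact Submodule.add_mem _ ha hb
      | smul t z hz hmem =>
          have h1 : t • z = (⟨(t : K), hTE t⟩ : ends D K N) • z := by
            rw [Algebra.smul_def, Algebra.smul_def]; rfl
          rw [h1]
          exact Submodule.smul_mem _ _ hmem
  -- conclude
  show Module.Flat (ends D K N) (overEnds D K N)
  have e : ((ends D K N) ⊗[ends D K (I : Submodule D K)]
      (overEnds D K (I : Submodule D K))) ≃ₗ[ends D K N] overEnds D K N :=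
    (LinearEquiv.ofInjective μ hμinj).trans (LinearEquiv.ofEq _ _ hrange)
  exact Module.Flat.of_linearEquiv (R := ends D K N)
    (M := (ends D K N) ⊗[ends D K (I : Submodule D K)] (overEnds D K (I : Submodule D K)))
    (N := overEnds D K N) e.symm
end

section
/- Let D be an integrally closed domain. Then D is quasi-stable if and only if D is finitely stable, if and only if D is a Prüfer domain. -/
open scoped nonZeroDivisors

set_option linter.unusedSectionVars false
set_option linter.unusedVariables false
set_option maxHeartbeats 1000000
set_option synthInstance.maxHeartbeats 1000000

open scoped TensorProduct Pointwise

namespace QSPrueferAux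
variable {D K : Type*} [CommRing D] [IsDomain D] [Field K] [Algebra D K] [IsFractionRing D K]

section E
variable {E : Subalgebra D K}

lemma mul_one_div_self (N : Submodule E K) (hfg : N.FG) (hN0 : N ≠ ⊥)
    (hflat : Module.Flat E N) : N * ((1 : Submodule E K) / N) = 1 := by
  classical
  obtain ⟨x₀, hx₀N, hx₀⟩ := Submodule.exists_mem_ne_zero_of_ne_bot hN0
  obtain ⟨s, hs⟩ := hfg
  set t : Finset K := insert x₀ s with ht
  have hNt : N = Submodule.span E (t : Set K) := by
    rw [ht, Finset.coe_insert, Submodule.span_insert_eq_span (by rw [hs]; exact hx₀N), hs]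
  have hgen : ∀ x ∈ t, x ∈ N := fun x hx => hNt ▸ Submodule.subset_span hx
  obtain ⟨dm, hdm⟩ := IsLocalization.exist_integer_multiples_of_finset D⁰ t
  set dK : K := algebraMap D K (dm : D) with hdK
  have hdK0 : dK ≠ 0 := by simp [hdK]
  have hcmem : ∀ x ∈ t, dK * x ∈ E := by
    intro x hx
    obtain ⟨w, hw⟩ := hdm x hx
    rw [Algebra.smul_def] at hw
    rw [← hw]
    exact E.algebraMap_mem w
  set ι := {x : K // x ∈ t}
  have : Fintype ι := FinsetCoe.fintype t
  set c : ι → E := fun i => ⟨dK * i.1, hcmem _ i.2⟩ with hc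
  set gN : ι → ↥N := fun i => ⟨i.1, hgen _ i.2⟩ with hgN
  set i₀ : ι := ⟨x₀, Finset.mem_insert_self _ _⟩ with hi₀
  set ψ : (ι →₀ E) →ₗ[E] ↥N := Finsupp.linearCombination E gN with hψ
  set v : ι → (ι →₀ E) := fun i => Finsupp.single i₀ (c i) - Finsupp.single i (c i₀) with hv
  set κ : (ι →₀ E) →ₗ[E] (ι →₀ E) := Finsupp.linearCombination E v with hκ
  have hψκ : ψ ∘ₗ κ = 0 := by
    apply Finsupp.lhom_ext
    intro i e
    have h1 : κ (Finsupp.single i e) = e • v i := by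
      simp [hκ, Finsupp.linearCombination_single]
    have h2 : ψ (v i) = 0 := by
      simp only [hv, map_sub, hψ, Finsupp.linearCombination_single]
      apply sub_eq_zero_of_eq
      apply Subtype.ext
      show (c i : K) * (gN i₀ : K) = (c i₀ : K) * (gN i : K)
      show (dK * i.1) * x₀ = (dK * x₀) * i.1
      ring
    simp [h1, map_smul, h2]

  haveI := hflat
  obtain ⟨κn, aF, y, hya, haκ⟩ :=
    Module.Flat.exists_factorization_of_comp_eq_zero_of_free (f := κ) (x := ψ) hψκ
  set Y : (Fin κn) → ↥N := fun j => y (Finsupp.single j 1) with hY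
  set B : ι → ((Fin κn) →₀ E) := fun i => aF (Finsupp.single i 1) with hB
  have hrep : ∀ f : (Fin κn) →₀ E, y f = f.sum fun j e => e • Y j := by
    intro f
    conv_lhs => rw [← Finsupp.sum_single f]
    rw [map_finsuppSum]
    apply Finsupp.sum_congr
    intro j hj
    rw [← Finsupp.smul_single_one, map_smul]
  have fact1 : ∀ i : ι, (i : K) = ∑ j ∈ (B i).support, ((B i) j : K) * (Y j : K) := by
    intro i
    have h1 : ψ (Finsupp.single i 1) = gN i := by
      simp [hψ, Finsupp.linearCombination_single]
    have h2 : ψ (Finsupp.single i 1) = y (B i) := by rw [hya]; rfl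
    have h3 : gN i = (B i).sum fun j e => e • Y j := by rw [← h1, h2, hrep]
    have h4 := congrArg (Subtype.val) h3
    simp only [hgN] at h4
    rw [h4]
    show ((((B i).sum fun j e => e • Y j) : ↥N) : K) = _
    rw [Finsupp.sum]
    rw [AddSubmonoidClass.coe_finset_sum]
    apply Finset.sum_congr rfl
    intro j hj
    rw [Submodule.coe_smul, Algebra.smul_def]
    rfl
  have fact2 : ∀ (i : ι) (j : (Fin κn)), (i : K) * ((B i₀) j : K) = x₀ * ((B i) j : K) := by
    intro i j
    have h0 : aF (v i) = 0 := by
      have := LinearMap.congr_fun haκ (Finsupp.single i 1)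
      simpa [hκ, Finsupp.linearCombination_single] using this
    have h1 : (c i) • B i₀ = (c i₀) • B i := by
      have : aF (Finsupp.single i₀ (c i)) = aF (Finsupp.single i (c i₀)) := by
        have := sub_eq_zero.mp (by simpa [hv, map_sub] using h0)
        exact this
      rw [← Finsupp.smul_single_one i₀ (c i), ← Finsupp.smul_single_one i (c i₀),
        map_smul, map_smul] at this
      exact this
    have h2 : (c i : K) * ((B i₀) j : K) = (c i₀ : K) * ((B i) j : K) := by
      have := congrArg (fun f => ((f j : E) : K)) h1
      simpa [Finsupp.smul_apply, smul_eq_mul] using this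
    show _ = _
    have hci : (c i : K) = dK * (i : K) := rfl
    have hci₀ : (c i₀ : K) = dK * x₀ := rfl
    rw [hci, hci₀] at h2
    apply mul_left_cancel₀ hdK0
    rw [show dK * ((i:K) * ((B i₀) j : K)) = dK * (i:K) * ((B i₀) j : K) by ring, h2]
    ring
  set tj : (Fin κn) → K := fun j => ((B i₀) j : K) * x₀⁻¹ with htj
  have claim_t : ∀ j, tj j ∈ (1 : Submodule E K) / N := by
    intro j
    rw [Submodule.mem_div_iff_forall_mul_mem]
    intro z hz
    rw [hNt] at hz
    induction hz using Submodule.span_induction with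
    | mem x hx =>
        have := fact2 ⟨x, hx⟩ j
        have hxeq : tj j * x = ((B ⟨x, hx⟩) j : K) := by
          rw [htj]
          field_simp
          rw [mul_comm ((B i₀) j : K) x]
          rw [this]
        rw [hxeq]
        exact Submodule.mem_one.mpr ⟨(B ⟨x, hx⟩) j, rfl⟩
    | zero => rw [mul_zero]; exact Submodule.zero_mem _
    | add a b _ _ ha hb => rw [mul_add]; exact Submodule.add_mem _ ha hb
    | smul e a _ ha =>
        have : tj j * (e • a) = e • (tj j * a) := by
          rw [Algebra.smul_def, Algebra.smul_def]; ring
        rw [this]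
        exact Submodule.smul_mem _ _ ha
  have claim1 : (1:K) = ∑ j ∈ (B i₀).support, (Y j : K) * tj j := by
    have h := fact1 i₀
    have hx : (i₀ : K) = x₀ := rfl
    rw [hx] at h
    have : x₀ * x₀⁻¹ = 1 := mul_inv_cancel₀ hx₀
    calc (1:K) = x₀ * x₀⁻¹ := this.symm
      _ = (∑ j ∈ (B i₀).support, ((B i₀) j : K) * (Y j : K)) * x₀⁻¹ := by rw [← h]
      _ = ∑ j ∈ (B i₀).support, (Y j : K) * tj j := by
          rw [Finset.sum_mul]
          apply Finset.sum_congr rfl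
          intro j hj
          rw [htj]
          ring
  have memprod : (1:K) ∈ N * ((1 : Submodule E K) / N) := by
    rw [claim1]
    exact Submodule.sum_mem _ fun j hj => Submodule.mul_mem_mul (Y j).2 (claim_t j)
  apply le_antisymm
  · apply Submodule.mul_le.2
    intro m hm n hn
    rw [mul_comm]
    exact (Submodule.mem_div_iff_forall_mul_mem.mp hn) m hm
  · exact (Submodule.one_le).2 memprod

lemma flat_of_invertible
    (hE : ∀ J : Ideal E, J ≠ ⊥ → J.FG →
      ∃ (n : ℕ) (a : Fin n → E) (b : Fin n → K), (∀ i, a i ∈ J) ∧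
        (∀ i, ∀ c ∈ J, b i * (c : K) ∈ E) ∧ ∑ i, (a i : K) * b i = 1)
    (N : Submodule E K) : Module.Flat E N := by
  rw [Module.Flat.iff_rTensor_injective]
  intro J hJfg
  rcases eq_or_ne J ⊥ with rfl | hJ0
  · intro x y hxy
    have hz : ∀ z : (⊥ : Ideal E) ⊗[E] N, z = 0 := by
      intro z
      induction z using TensorProduct.induction_on with
      | zero => rfl
      | tmul c n =>
          have : c = 0 := Subtype.ext ((Submodule.mem_bot E).mp c.2)
          rw [this, TensorProduct.zero_tmul]
      | add a b ha hb => rw [ha, hb, add_zero]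
    rw [hz x, hz y]
  · obtain ⟨n, a, b, haJ, hbJ, hab⟩ := hE J hJ0 hJfg
    rw [injective_iff_map_eq_zero]
    intro x hx
    -- bilinear maps
    set Bc : Fin n → (J →ₗ[E] E) := fun i =>
      { toFun := fun c => ⟨b i * (c : K), hbJ i (c : E) c.2⟩
        map_add' := by
          intro c d
          apply Subtype.ext
          push_cast
          ring
        map_smul' := by
          intro e c
          apply Subtype.ext
          show b i * ((((e • c) : J) : E) : K) = ((e * ⟨b i * (c : K), _⟩ : E) : K)
          push_cast
          show b i * ((e : K) * (c : K)) = (e : K) * (b i * (c : K))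
          ring } with hBc
    set τ : Fin n → (J ⊗[E] N →ₗ[E] N) := fun i =>
      TensorProduct.lift ((LinearMap.lsmul E N) ∘ₗ (Bc i)) with hτ
    set m : J ⊗[E] N →ₗ[E] K :=
      TensorProduct.lift (((LinearMap.mul E K).comp
        ((Algebra.linearMap E K) ∘ₗ J.subtype)).compl₂ N.subtype) with hm
    have h1 : m x = 0 := by
      have hcomp : m = (TensorProduct.lift (((LinearMap.mul E K).comp
          (Algebra.linearMap E K)).compl₂ N.subtype)) ∘ₗ (LinearMap.rTensor N J.subtype) := by
        apply TensorProduct.ext'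
        intro c nn
        rfl
      rw [hcomp]
      simp [hx]
    have h3 : ∀ i, (τ i x : K) = b i * m x := by
      intro i
      have : N.subtype ∘ₗ (τ i) = ((LinearMap.mul E K) (b i)) ∘ₗ m := by
        apply TensorProduct.ext'
        intro c nn
        show ((Bc i c • nn : N) : K) = b i * ((c : K) * (nn : K))
        rw [Submodule.coe_smul, Algebra.smul_def]
        show (b i * (c:K)) * (nn : K) = _
        ring
      have := LinearMap.congr_fun this x
      simpa using this
    have h2 : x = ∑ i, (⟨a i, haJ i⟩ : J) ⊗ₜ[E] (τ i x) := by
      have : (LinearMap.id : J ⊗[E] N →ₗ[E] J ⊗[E] N) =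
          ∑ i, (TensorProduct.mk E J N ⟨a i, haJ i⟩) ∘ₗ (τ i) := by
        apply TensorProduct.ext'
        intro c nn
        simp only [LinearMap.id_apply, LinearMap.sum_apply, LinearMap.comp_apply]
        have hterm : ∀ i, (TensorProduct.mk E J N ⟨a i, haJ i⟩) (τ i (c ⊗ₜ[E] nn)) =
            ((Bc i c) • (⟨a i, haJ i⟩ : J)) ⊗ₜ[E] nn := by
          intro i
          show (⟨a i, haJ i⟩ : J) ⊗ₜ[E] ((Bc i c) • nn) = _
          rw [TensorProduct.smul_tmul]
        rw [Finset.sum_congr rfl fun i _ => hterm i, ← TensorProduct.sum_tmul]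
        congr 1
        apply Subtype.ext
        apply Subtype.ext
        push_cast
        symm
        have hterm2 : ∀ i, (((((Bc i) c) • (a i) : E)) : K)
            = (b i * ((c : E) : K)) * ((a i : E) : K) := fun i => rfl
        rw [Finset.sum_congr rfl fun i _ => hterm2 i]
        calc ∑ i, (b i * ((c : E) : K)) * ((a i : E) : K)
            = ((c : E) : K) * ∑ i, ((a i : E) : K) * b i := by
              rw [Finset.mul_sum]; exact Finset.sum_congr rfl fun i _ => by ring
          _ = ((c : E) : K) := by rw [hab, mul_one]
      have := LinearMap.congr_fun this x
      simpa using this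
    rw [h2]
    apply Finset.sum_eq_zero
    intro i _
    have : τ i x = 0 := by
      have := h3 i
      rw [h1, mul_zero] at this
      exact Subtype.ext this
    rw [this, TensorProduct.tmul_zero]

end E

lemma invertible_of_prufer
    (hC : ∀ I : Ideal D, I ≠ ⊥ → I.FG →
      (I : FractionalIdeal D⁰ K) * (I : FractionalIdeal D⁰ K)⁻¹ = 1)
    (E : Subalgebra D K) (J : Ideal E) (hJ0 : J ≠ ⊥) (hJfg : J.FG) :
    ∃ (n : ℕ) (a : Fin n → E) (b : Fin n → K), (∀ i, a i ∈ J) ∧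
      (∀ i, ∀ c ∈ J, b i * (c : K) ∈ E) ∧ ∑ i, (a i : K) * b i = 1 := by
  classical
  obtain ⟨s, hs⟩ := hJfg
  set sK : Finset K := s.image (fun e : E => (e : K)) with hsK
  obtain ⟨dm, hdm⟩ := IsLocalization.exist_integer_multiples_of_finset D⁰ sK
  set dK : K := algebraMap D K (dm : D) with hdKdef
  have hdK0 : dK ≠ 0 := by simp [hdKdef]
  have hnum : ∀ z : E, z ∈ s → ∃ w : D, algebraMap D K w = dK * (z : K) := by
    intro z hz
    obtain ⟨w, hw⟩ := hdm (z : K) (Finset.mem_image_of_mem _ hz)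
    exact ⟨w, by rw [hw, Algebra.smul_def]⟩
  set u : E → D := fun z =>
    if h : ∃ w : D, algebraMap D K w = dK * (z : K) then h.choose else 0 with hu
  have hu_spec : ∀ z ∈ s, algebraMap D K (u z) = dK * (z : K) := by
    intro z hz
    have h := hnum z hz
    simp only [hu, dif_pos h]
    exact h.choose_spec
  set I₀ : Ideal D := Ideal.span ↑(s.image u) with hI₀
  have hI₀fg : I₀.FG := ⟨s.image u, rfl⟩
  obtain ⟨z₁, hz₁J, hz₁⟩ := Submodule.exists_mem_ne_zero_of_ne_bot hJ0
  have hz1span : ∃ z ∈ s, z ≠ 0 := by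
    by_contra h
    push_neg at h
    apply hz₁
    have hJbot : J ≤ ⊥ := by
      rw [← hs, Ideal.span_le]
      intro z hz
      rw [SetLike.mem_coe, Submodule.mem_bot]
      exact h z hz
    exact (Submodule.mem_bot E).mp (hJbot hz₁J)
  obtain ⟨z₀, hz₀s, hz₀⟩ := hz1span
  have hI₀0 : I₀ ≠ ⊥ := by
    intro hbot
    have hmem : u z₀ ∈ I₀ := Ideal.subset_span (Finset.mem_coe.mpr (Finset.mem_image_of_mem u hz₀s))
    rw [hbot, Submodule.mem_bot] at hmem
    have h2 := hu_spec z₀ hz₀s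
    rw [hmem, map_zero] at h2
    have hz₀K : (z₀ : K) ≠ 0 := by
      intro h
      exact hz₀ (Subtype.ext h)
    exact (mul_ne_zero hdK0 hz₀K) h2.symm
  have hinv := hC I₀ hI₀0 hI₀fg
  set M₀ : Submodule D K := ((I₀ : FractionalIdeal D⁰ K) : Submodule D K) with hM₀
  have hsub : M₀ * ((1 : Submodule D K) / M₀) = 1 := by
    have h0 : (I₀ : FractionalIdeal D⁰ K) ≠ 0 := by
      rw [FractionalIdeal.coeIdeal_ne_zero]; exact hI₀0
    have h1 := congrArg (fun I : FractionalIdeal D⁰ K => (I : Submodule D K)) hinv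
    simpa [hM₀, FractionalIdeal.coe_mul, FractionalIdeal.inv_eq, FractionalIdeal.coe_div h0,
      FractionalIdeal.coe_one] using h1
  have hone : (1:K) ∈ M₀ * ((1 : Submodule D K) / M₀) := by
    rw [hsub]
    exact Submodule.mem_one.mpr ⟨1, map_one _⟩
  rw [Submodule.mul_eq_span_mul_set] at hone
  obtain ⟨nn, f, g, hsum⟩ := Submodule.mem_span_set'.mp hone
  have hks : ∀ i : Fin nn, ∃ mw : K × K, mw.1 ∈ M₀ ∧
      mw.2 ∈ ((1 : Submodule D K) / M₀) ∧ mw.1 * mw.2 = (g i : K) := by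
    intro i
    obtain ⟨x, hx, y, hy, hxy⟩ := Set.mem_mul.mp (g i).2
    exact ⟨(x, y), hx, hy, hxy⟩
  choose mw hmwM hmwD hmwEq using hks
  -- the transporter submodule T
  set T : Submodule D K :=
    { carrier := {x : K | ∃ e : E, e ∈ J ∧ (e : K) * dK = x}
      zero_mem' := ⟨0, J.zero_mem, by simp⟩
      add_mem' := by
        rintro x y ⟨e, he, hex⟩ ⟨f, hf, hfy⟩
        exact ⟨e + f, J.add_mem he hf, by push_cast; rw [add_mul, hex, hfy]⟩
      smul_mem' := by
        rintro d x ⟨e, he, hex⟩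
        refine ⟨algebraMap D E d * e, J.mul_mem_left _ he, ?_⟩
        push_cast
        rw [mul_assoc, hex, Algebra.smul_def] } with hT
  have hMT : M₀ ≤ T := by
    have hM₀span : M₀ = Submodule.span D ((algebraMap D K) '' ↑(s.image u)) := by
      rw [hM₀, FractionalIdeal.coe_coeIdeal, IsLocalization.coeSubmodule, hI₀, Ideal.span,
        Submodule.map_span]
      rfl
    rw [hM₀span, Submodule.span_le]
    rintro x ⟨w, hw, rfl⟩
    obtain ⟨z, hz, rfl⟩ := Finset.mem_image.mp (Finset.mem_coe.mp hw)
    exact ⟨z, hs ▸ Submodule.subset_span hz, by rw [hu_spec z hz, mul_comm]⟩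
  -- choose J-elements
  have hkey : ∀ i : Fin nn, ∃ e : E, e ∈ J ∧ (e : K) * dK = f i • (mw i).1 := by
    intro i
    exact hMT (M₀.smul_mem (f i) (hmwM i))
  choose ek hekJ hekEq using hkey
  refine ⟨nn, fun i => ek i, fun i => dK * (mw i).2, fun i => hekJ i, ?_, ?_⟩
  · intro i c hc
    rw [← hs] at hc
    induction hc using Submodule.span_induction with
    | mem z hz =>
        have h1 : dK * (mw i).2 * (z : K) = (mw i).2 * algebraMap D K (u z) := by
          rw [hu_spec z hz]; ring
        rw [h1]
        have h2 : algebraMap D K (u z) ∈ M₀ := by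
          rw [hM₀, FractionalIdeal.coe_coeIdeal]
          exact IsLocalization.mem_coeSubmodule K I₀ |>.mpr
            ⟨u z, Ideal.subset_span (Finset.mem_coe.mpr (Finset.mem_image_of_mem u hz)), rfl⟩
        have h3 := Submodule.mem_div_iff_forall_mul_mem.mp (hmwD i) _ h2
        obtain ⟨y, hy⟩ := Submodule.mem_one.mp h3
        rw [← hy]
        exact E.algebraMap_mem y
    | zero => simpa using E.zero_mem
    | add p q hp hq ihp ihq => push_cast; rw [mul_add]; exact E.add_mem ihp ihq
    | smul e z hz ihz =>
        have : (dK * (mw i).2) * ((e • z : E) : K) =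
            (e : K) * ((dK * (mw i).2) * (z : K)) := by
          show (dK * (mw i).2) * (((e * z : E)) : K) = _
          push_cast
          ring
        rw [this]
        exact E.mul_mem (SetLike.coe_mem e) ihz
  · have hstep : ∀ i : Fin nn, (ek i : K) * (dK * (mw i).2) = f i • (g i : K) := by
      intro i
      rw [← mul_assoc, hekEq i, smul_mul_assoc, hmwEq i]
    rw [Finset.sum_congr rfl fun i _ => hstep i]
    exact hsum

def endsSub (N : Submodule D K) : Submodule (ends D K N) K where
  carrier := N
  add_mem' := fun ha hb => N.add_mem ha hb
  zero_mem' := N.zero_mem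
  smul_mem' := fun e x hx => by
    rw [Algebra.smul_def]
    exact e.2 x hx

lemma overEnds_eq (N : Submodule D K) : overEnds D K N = endsSub N :=
  le_antisymm (Submodule.span_le.2 fun x hx => hx) fun x hx => Submodule.subset_span hx

lemma mem_overEnds {N : Submodule D K} {x : K} : x ∈ overEnds D K N ↔ x ∈ N := by
  rw [overEnds_eq]; exact Iff.rfl

lemma ends_eq_bot [IsIntegrallyClosed D] (I : Ideal D) (hI : I ≠ ⊥) (hfg : I.FG) :
    ends D K ((I : FractionalIdeal D⁰ K) : Submodule D K) = ⊥ := by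
  set M := ((I : FractionalIdeal D⁰ K) : Submodule D K) with hM
  apply le_antisymm _ bot_le
  intro x hx
  rw [Algebra.mem_bot]
  have hM0 : M ≠ ⊥ := by
    rw [hM, Ne, FractionalIdeal.coeToSubmodule_eq_bot]
    exact FractionalIdeal.coeIdeal_ne_zero.mpr hI
  have hMfg : M.FG := by
    rw [hM, FractionalIdeal.coe_coeIdeal, IsLocalization.coeSubmodule]
    exact Submodule.FG.map _ hfg
  have hint : IsIntegral D x := isIntegral_of_smul_mem_submodule M hM0 hMfg x (by
    intro n hn
    rw [smul_eq_mul]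
    exact hx n hn)
  obtain ⟨y, hy⟩ := IsIntegrallyClosed.isIntegral_iff.mp hint
  exact ⟨y, hy⟩

def toSubE (E : Subalgebra D K) (hEb : E = ⊥) (S : Submodule D K) : Submodule E K where
  carrier := S
  add_mem' := fun ha hb => S.add_mem ha hb
  zero_mem' := S.zero_mem
  smul_mem' := fun e x hx => by
    have he : (e : K) ∈ (⊥ : Subalgebra D K) := by rw [← hEb]; exact e.2
    obtain ⟨d, hd⟩ := Algebra.mem_bot.mp he
    rw [Algebra.smul_def]
    show ((e : K)) * x ∈ S
    rw [← hd, ← Algebra.smul_def]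
    exact S.smul_mem d hx

lemma span_transfer {E : Subalgebra D K} (hEb : E = ⊥) (s : Set K) (x : K) :
    x ∈ Submodule.span E s ↔ x ∈ Submodule.span D s := by
  constructor
  · intro hx
    exact Submodule.span_le (p := toSubE E hEb (Submodule.span D s)).mpr
      (fun z hz => Submodule.subset_span hz) hx
  · intro hx
    have : Submodule.span D s ≤ Submodule.restrictScalars D (Submodule.span E s) :=
      Submodule.span_le.mpr fun z hz => Submodule.subset_span hz
    exact this hx

lemma one_transfer {E : Subalgebra D K} (hEb : E = ⊥) (x : K) :
    x ∈ (1 : Submodule E K) ↔ x ∈ (1 : Submodule D K) := by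
  rw [Submodule.mem_one, Submodule.mem_one]
  constructor
  · rintro ⟨y, rfl⟩
    have hy : (y : K) ∈ (⊥ : Subalgebra D K) := by rw [← hEb]; exact y.2
    obtain ⟨d, hd⟩ := Algebra.mem_bot.mp hy
    exact ⟨d, hd⟩
  · rintro ⟨d, rfl⟩
    exact ⟨⟨algebraMap D K d, E.algebraMap_mem d⟩, rfl⟩

lemma mulDiv_transfer {M : Submodule D K} (hEb : ends D K M = ⊥) :
    (overEnds D K M * ((1 : Submodule (ends D K M) K) / overEnds D K M) = 1) ↔
    (M * ((1 : Submodule D K) / M) = 1) := by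
  set E := ends D K M with hE
  have hover : ∀ x : K, x ∈ overEnds D K M ↔ x ∈ M := fun x => mem_overEnds
  have hdiv : ∀ x : K, x ∈ (1 : Submodule E K) / overEnds D K M ↔
      x ∈ (1 : Submodule D K) / M := by
    intro x
    rw [Submodule.mem_div_iff_forall_mul_mem, Submodule.mem_div_iff_forall_mul_mem]
    constructor
    · intro h y hy
      rw [← one_transfer hEb]
      exact h y ((hover y).mpr hy)
    · intro h y hy
      rw [one_transfer hEb]
      exact h y ((hover y).mp hy)
  have hmul : ∀ x : K, x ∈ overEnds D K M * ((1 : Submodule E K) / overEnds D K M) ↔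
      x ∈ M * ((1 : Submodule D K) / M) := by
    intro x
    rw [Submodule.mul_eq_span_mul_set, Submodule.mul_eq_span_mul_set, span_transfer hEb]
    have hsets : ((overEnds D K M : Set K) * (((1 : Submodule E K) / overEnds D K M :
        Submodule E K) : Set K)) = ((M : Set K) * (((1 : Submodule D K) / M :
        Submodule D K) : Set K)) := by
      congr 1
      · ext z; exact hover z
      · ext z; exact hdiv z
    rw [hsets]
  constructor
  · intro h
    ext x
    rw [← hmul x, h, one_transfer hEb]
  · intro h
    ext x
    rw [hmul x, h, ← one_transfer hEb]

lemma overEnds_fg {M : Submodule D K} (hEb : ends D K M = ⊥) (hfg : M.FG) :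
    (overEnds D K M).FG := by
  obtain ⟨s, hs⟩ := hfg
  refine ⟨s, le_antisymm (Submodule.span_le.mpr ?_) ?_⟩
  · intro z hz
    rw [SetLike.mem_coe, mem_overEnds, ← hs]
    exact Submodule.subset_span hz
  · intro x hx
    rw [mem_overEnds, ← hs] at hx
    exact (span_transfer hEb _ x).mpr hx

lemma overEnds_ne_bot {M : Submodule D K} (hM : M ≠ ⊥) : overEnds D K M ≠ ⊥ := by
  obtain ⟨x, hxM, hx⟩ := Submodule.exists_mem_ne_zero_of_ne_bot hM
  rw [Submodule.ne_bot_iff]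
  exact ⟨x, mem_overEnds.mpr hxM, hx⟩

lemma C_iff_submodule (I : Ideal D) (hI0 : I ≠ ⊥) :
    ((I : FractionalIdeal D⁰ K) * (I : FractionalIdeal D⁰ K)⁻¹ = 1) ↔
    (((I : FractionalIdeal D⁰ K) : Submodule D K) *
      ((1 : Submodule D K) / ((I : FractionalIdeal D⁰ K) : Submodule D K)) = 1) := by
  have h0 : (I : FractionalIdeal D⁰ K) ≠ 0 := FractionalIdeal.coeIdeal_ne_zero.mpr hI0
  rw [← FractionalIdeal.coeToSubmodule_inj, FractionalIdeal.coe_mul, FractionalIdeal.inv_eq,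
    FractionalIdeal.coe_div h0, FractionalIdeal.coe_one]

end QSPrueferAux

open QSPrueferAux
/-- For an integrally closed domain `D`, the following are equivalent: `D` is quasi-stable;
`D` is finitely stable; `D` is a Prüfer domain. -/
theorem integrallyClosed_quasiStable_iff_finitelyStable_iff_prufer
    (D K : Type*) [CommRing D] [IsDomain D] [Field K] [Algebra D K] [IsFractionRing D K]
    [IsIntegrallyClosed D] :
    ((∀ I : FractionalIdeal D⁰ K, I ≠ 0 → IsQuasiStable D K (I : Submodule D K)) ↔
      (∀ I : Ideal D, I ≠ ⊥ → I.FG →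
        overEnds D K ((I : FractionalIdeal D⁰ K) : Submodule D K) *
          ((1 : Submodule (ends D K ((I : FractionalIdeal D⁰ K) : Submodule D K)) K) /
            overEnds D K ((I : FractionalIdeal D⁰ K) : Submodule D K)) = 1)) ∧
    ((∀ I : Ideal D, I ≠ ⊥ → I.FG →
        overEnds D K ((I : FractionalIdeal D⁰ K) : Submodule D K) *
          ((1 : Submodule (ends D K ((I : FractionalIdeal D⁰ K) : Submodule D K)) K) /
            overEnds D K ((I : FractionalIdeal D⁰ K) : Submodule D K)) = 1) ↔
      (∀ I : Ideal D, I ≠ ⊥ → I.FG →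
        (I : FractionalIdeal D⁰ K) * (I : FractionalIdeal D⁰ K)⁻¹ = 1)) := by
  have hBC : ∀ I : Ideal D, I ≠ ⊥ → I.FG →
      ((overEnds D K ((I : FractionalIdeal D⁰ K) : Submodule D K) *
          ((1 : Submodule (ends D K ((I : FractionalIdeal D⁰ K) : Submodule D K)) K) /
            overEnds D K ((I : FractionalIdeal D⁰ K) : Submodule D K)) = 1) ↔
        ((I : FractionalIdeal D⁰ K) * (I : FractionalIdeal D⁰ K)⁻¹ = 1)) := by
    intro I hI0 hfg
    rw [mulDiv_transfer (ends_eq_bot I hI0 hfg), C_iff_submodule I hI0]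
  have hCA : (∀ I : Ideal D, I ≠ ⊥ → I.FG →
        (I : FractionalIdeal D⁰ K) * (I : FractionalIdeal D⁰ K)⁻¹ = 1) →
      ∀ I : FractionalIdeal D⁰ K, I ≠ 0 → IsQuasiStable D K (I : Submodule D K) := by
    intro hC I hI0
    show Module.Flat (ends D K (I : Submodule D K)) (overEnds D K (I : Submodule D K))
    exact flat_of_invertible (fun J hJ0 hJfg => invertible_of_prufer hC _ J hJ0 hJfg) _
  have hAB : (∀ I : FractionalIdeal D⁰ K, I ≠ 0 → IsQuasiStable D K (I : Submodule D K)) →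
      ∀ I : Ideal D, I ≠ ⊥ → I.FG →
        overEnds D K ((I : FractionalIdeal D⁰ K) : Submodule D K) *
          ((1 : Submodule (ends D K ((I : FractionalIdeal D⁰ K) : Submodule D K)) K) /
            overEnds D K ((I : FractionalIdeal D⁰ K) : Submodule D K)) = 1 := by
    intro hA I hI0 hfg
    have hEb := ends_eq_bot (K := K) I hI0 hfg
    have hM0 : ((I : FractionalIdeal D⁰ K) : Submodule D K) ≠ ⊥ := by
      rw [Ne, FractionalIdeal.coeToSubmodule_eq_bot]
      exact FractionalIdeal.coeIdeal_ne_zero.mpr hI0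
    have hMfg : ((I : FractionalIdeal D⁰ K) : Submodule D K).FG := by
      rw [FractionalIdeal.coe_coeIdeal, IsLocalization.coeSubmodule]
      exact Submodule.FG.map _ hfg
    exact mul_one_div_self _ (overEnds_fg hEb hMfg) (overEnds_ne_bot hM0)
      (hA _ (FractionalIdeal.coeIdeal_ne_zero.mpr hI0))
  refine ⟨⟨fun hA I hI0 hfg => hAB hA I hI0 hfg,
      fun hB I hI0 => hCA (fun I' h1 h2 => (hBC I' h1 h2).mp (hB I' h1 h2)) I hI0⟩,
    ⟨fun hB I h1 h2 => (hBC I h1 h2).mp (hB I h1 h2),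
      fun hC I h1 h2 => (hBC I h1 h2).mpr (hC I h1 h2)⟩⟩
end

section
/- Let D be an integral domain and I a flat nonzero fractional ideal of D. For every nonzero t-finite fractional ideal J of D, (I:J) = I·J⁻¹. -/
open scoped nonZeroDivisors

universe u

/-- Key lemma, same-universe version: if `I` is flat and `H` is a finitely generated nonzero
fractional ideal, then `(I : H) ⊆ I · H⁻¹`. -/
lemma flat_div_le_core {D K : Type u} [CommRing D] [IsDomain D] [Field K] [Algebra D K]
    [IsFractionRing D K] (I H : FractionalIdeal D⁰ K)
    (hflat : Module.Flat D (I : Submodule D K)) (hH : H ≠ 0)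
    (hfg : (H : Submodule D K).FG) : I / H ≤ I * (1 / H) := by
  classical
  obtain ⟨n, hg, hspan⟩ := Submodule.fg_iff_exists_fin_generating_family.mp hfg
  have hmemH : ∀ i, hg i ∈ (H : Submodule D K) := fun i =>
    hspan ▸ Submodule.subset_span (Set.mem_range_self i)
  obtain ⟨i0, hi0⟩ : ∃ i0, hg i0 ≠ 0 := by
    by_contra h
    push_neg at h
    apply hH
    rw [← FractionalIdeal.coeToSubmodule_injective.eq_iff, FractionalIdeal.coe_zero, ← hspan]
    refine le_bot_iff.mp (Submodule.span_le.mpr ?_)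
    rintro _ ⟨i, rfl⟩
    simp [h i]
  obtain ⟨d, hd, hden⟩ := H.isFractional
  choose c hc using fun i => hden (hg i) (hmemH i)
  -- hc : ∀ i, algebraMap D K (c i) = d • hg i
  intro x hx
  replace hx : x ∈ I / H := hx
  show x ∈ I * (1 / H)
  rw [FractionalIdeal.mem_div_iff_of_ne_zero hH] at hx
  set M := ↥(I : Submodule D K) with hM
  let xv : Fin n → M := fun i => ⟨x * hg i, hx _ (hmemH i)⟩
  let ι := ULift.{u} (Fin n)
  let ρ := ULift.{u} (Fin n × Fin n)
  let xlin : (ι →₀ D) →ₗ[D] M := Finsupp.linearCombination D (fun i : ι => xv i.down)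
  let rel : ρ → (ι →₀ D) := fun p =>
    c p.down.2 • Finsupp.single ⟨p.down.1⟩ 1 - c p.down.1 • Finsupp.single ⟨p.down.2⟩ 1
  let flin : (ρ →₀ D) →ₗ[D] (ι →₀ D) := Finsupp.linearCombination D rel
  have hd0 : algebraMap D K d ≠ 0 :=
    IsFractionRing.to_map_ne_zero_of_mem_nonZeroDivisors hd
  have hcomp : xlin ∘ₗ flin = 0 := by
    apply Finsupp.lhom_ext
    intro r b
    suffices h1 : xlin (rel r) = 0 by
      simp only [LinearMap.comp_apply, flin, Finsupp.linearCombination_single,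
        LinearMap.zero_apply, map_smul, h1, smul_zero]
    apply Subtype.ext
    simp only [rel, map_sub, map_smul, xlin, Finsupp.linearCombination_single, one_smul]
    show (c r.down.2 • (xv r.down.1 : K)) - (c r.down.1 • (xv r.down.2 : K)) = (0 : K)
    simp only [Algebra.smul_def, xv]
    rw [hc, hc]
    simp only [Algebra.smul_def]
    ring
  obtain ⟨k0, a, y, hxy, haf⟩ :=
    Module.Flat.exists_factorization_of_comp_eq_zero_of_free (f := flin) (x := xlin) hcomp
  let κ := Fin k0
  let z : κ → M := fun k => y (Finsupp.single k 1)
  let α : Fin n → (κ →₀ D) := fun i => a (Finsupp.single ⟨i⟩ 1)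
  have hy : ∀ g : κ →₀ D, y g = g.sum fun k cc => cc • z k := by
    intro g
    conv_lhs => rw [← Finsupp.sum_single g]
    rw [map_finsuppSum]
    refine Finsupp.sum_congr fun k _ => ?_
    rw [← Finsupp.smul_single_one k (g k), map_smul]
  have hxvi : ∀ i, (xv i : K) = ((α i).sum fun k cc => cc • z k : M) := by
    intro i
    have h1 : xv i = xlin (Finsupp.single (⟨i⟩ : ι) 1) := by
      simp [xlin, Finsupp.linearCombination_single]
    rw [h1, hxy]
    simp only [LinearMap.comp_apply]
    rw [hy]
  have hrel : ∀ (i j : Fin n) (k : κ), c j * α i k = c i * α j k := by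
    intro i j k
    have h0 : a (rel ⟨(i, j)⟩) = 0 := by
      have := LinearMap.congr_fun haf (Finsupp.single (⟨(i, j)⟩ : ρ) 1)
      simpa [flin, Finsupp.linearCombination_single] using this
    have h1 : c j • α i - c i • α j = 0 := by
      calc c j • α i - c i • α j = a (rel ⟨(i, j)⟩) := by
            simp only [rel, map_sub, map_smul]; rfl
        _ = 0 := h0
    have h2 := DFunLike.congr_fun h1 k
    simpa [sub_eq_zero, Finsupp.smul_apply, smul_eq_mul] using h2
  let β : Fin n → κ → K := fun i k => algebraMap D K (α i k)
  have hrelK : ∀ (i j : Fin n) (k : κ), hg j * β i k = hg i * β j k := by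
    intro i j k
    have h1 : algebraMap D K (c j * α i k) = algebraMap D K (c i * α j k) := by
      rw [hrel i j k]
    rw [map_mul, map_mul, hc, hc] at h1
    simp only [Algebra.smul_def] at h1
    apply mul_left_cancel₀ hd0
    calc algebraMap D K d * (hg j * β i k) = algebraMap D K d * hg j * β i k := by ring
    _ = algebraMap D K d * hg i * β j k := h1
    _ = algebraMap D K d * (hg i * β j k) := by ring
  let q : κ → K := fun k => β i0 k * (hg i0)⁻¹
  have hq : ∀ k, q k ∈ (1 / H : FractionalIdeal D⁰ K) := by
    intro k
    rw [FractionalIdeal.mem_div_iff_of_ne_zero hH]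
    intro b hb
    have hb' : b ∈ (H : Submodule D K) := hb
    rw [← hspan] at hb'
    have hT : Submodule.span D (Set.range hg) ≤
        Submodule.comap (LinearMap.mul D K (q k)) ((1 : FractionalIdeal D⁰ K) : Submodule D K) := by
      refine Submodule.span_le.mpr ?_
      rintro _ ⟨j, rfl⟩
      simp only [SetLike.mem_coe, Submodule.mem_comap, LinearMap.mul_apply']
      have : q k * hg j = β j k := by
        have := hrelK i0 j k
        show β i0 k * (hg i0)⁻¹ * hg j = β j k
        rw [mul_right_comm, mul_comm (β i0 k) (hg j), this, mul_right_comm,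
          mul_inv_cancel₀ hi0, one_mul]
      rw [this]
      exact FractionalIdeal.mem_coe.mpr ((FractionalIdeal.mem_one_iff D⁰).mpr ⟨α j k, rfl⟩)
    have h2 := hT hb'
    rw [Submodule.mem_comap] at h2
    exact FractionalIdeal.mem_coe.mp h2
  -- now express x as a combination
  have hx0 : x = ∑ k ∈ (α i0).support, (z k : K) * (algebraMap D K (α i0 k) * (hg i0)⁻¹) := by
    have h1 : x = (x * hg i0) * (hg i0)⁻¹ := by
      field_simp
    rw [h1]
    have h2 : (x * hg i0) = (xv i0 : K) := rfl
    rw [h2, hxvi i0]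
    have h3 : (((α i0).sum fun k cc => cc • z k : M) : K)
        = ∑ k ∈ (α i0).support, algebraMap D K (α i0 k) * (z k : K) := by
      rw [Finsupp.sum]
      rw [AddSubmonoidClass.coe_finset_sum]
      refine Finset.sum_congr rfl fun k _ => ?_
      rw [Submodule.coe_smul, Algebra.smul_def]
    rw [h3, Finset.sum_mul]
    refine Finset.sum_congr rfl fun k _ => ?_
    ring
  rw [hx0]
  refine FractionalIdeal.mem_coe.mp (Submodule.sum_mem _ fun k _ => ?_)
  exact FractionalIdeal.mem_coe.mpr
    (FractionalIdeal.mul_mem_mul (FractionalIdeal.mem_coe.mp (z k).2) (hq k))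

/-- Key lemma, general version. -/
lemma flat_div_le {D : Type*} {K : Type*} [CommRing D] [IsDomain D] [Field K] [Algebra D K]
    [IsFractionRing D K] (I H : FractionalIdeal D⁰ K)
    (hflat : Module.Flat D (I : Submodule D K)) (hH : H ≠ 0)
    (hfg : (H : Submodule D K).FG) : I / H ≤ I * (1 / H) := by
  let g : K ≃ₐ[D] FractionRing D := (FractionRing.algEquiv D K).symm
  have hinj : Function.Injective (g : K →ₐ[D] FractionRing D) := g.injective
  have hflat' : Module.Flat D ((I.map (g : K →ₐ[D] FractionRing D) :
      FractionalIdeal D⁰ (FractionRing D)) : Submodule D (FractionRing D)) := by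
    have hcoe : ((I.map (g : K →ₐ[D] FractionRing D)) : Submodule D (FractionRing D)) =
        Submodule.map (AlgHom.toLinearMap (g : K →ₐ[D] FractionRing D)) (I : Submodule D K) :=
      FractionalIdeal.coe_map _ _
    exact Module.Flat.of_linearEquiv
      ((LinearEquiv.ofEq _ _ hcoe).trans
        (Submodule.equivMapOfInjective (AlgHom.toLinearMap (g : K →ₐ[D] FractionRing D)) hinj
          (I : Submodule D K)).symm)
  have hH' : H.map (g : K →ₐ[D] FractionRing D) ≠ 0 := FractionalIdeal.map_ne_zero _ hH
  have hfg' : ((H.map (g : K →ₐ[D] FractionRing D) :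
      FractionalIdeal D⁰ (FractionRing D)) : Submodule D (FractionRing D)).FG := by
    rw [FractionalIdeal.coe_map]
    exact Submodule.FG.map _ hfg
  have key := flat_div_le_core _ _ hflat' hH' hfg'
  rw [← FractionalIdeal.map_div _ _ g] at key
  rw [← FractionalIdeal.map_one_div _ g, ← FractionalIdeal.map_mul] at key
  intro x hx
  replace hx : x ∈ I / H := hx
  show x ∈ I * (1 / H)
  have h1 : g x ∈ FractionalIdeal.map (g : K →ₐ[D] FractionRing D) (I / H) :=
    (FractionalIdeal.map_mem_map hinj).mpr hx
  have h2 := key h1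
  replace h2 : g x ∈ FractionalIdeal.map (g : K →ₐ[D] FractionRing D) (I * (1 / H)) := h2
  exact (FractionalIdeal.map_mem_map hinj).mp h2

lemma le_tClosure' {D K : Type*} [CommRing D] [IsDomain D] [Field K] [Algebra D K]
    [IsFractionRing D K] (J : FractionalIdeal D⁰ K) :
    (J : Submodule D K) ≤
      ⨆ J' : {J' : FractionalIdeal D⁰ K // J' ≤ J ∧ (J' : Submodule D K).FG},
        ((1 / (1 / (J' : FractionalIdeal D⁰ K)) : FractionalIdeal D⁰ K) : Submodule D K) := by
  intro x hx
  by_cases hx0 : x = 0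
  · simpa [hx0] using Submodule.zero_mem _
  have hxJ : x ∈ J := hx
  have hle : FractionalIdeal.spanSingleton D⁰ x ≤ J :=
    FractionalIdeal.spanSingleton_le_iff_mem.mpr hxJ
  have hfg : ((FractionalIdeal.spanSingleton D⁰ x : FractionalIdeal D⁰ K) : Submodule D K).FG := by
    rw [FractionalIdeal.coe_spanSingleton]
    exact Submodule.fg_span_singleton x
  refine le_iSup (fun (J' : {J' : FractionalIdeal D⁰ K // J' ≤ J ∧ (J' : Submodule D K).FG}) =>
      ((1 / (1 / (J' : FractionalIdeal D⁰ K)) : FractionalIdeal D⁰ K) : Submodule D K))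
    ⟨FractionalIdeal.spanSingleton D⁰ x, hle, hfg⟩ ?_
  show x ∈ ((1 / (1 / (FractionalIdeal.spanSingleton D⁰ x)) :
      FractionalIdeal D⁰ K) : Submodule D K)
  rw [FractionalIdeal.one_div_spanSingleton, FractionalIdeal.one_div_spanSingleton, inv_inv]
  exact FractionalIdeal.mem_coe.mpr (FractionalIdeal.mem_spanSingleton_self D⁰ x)

lemma one_div_ne_zero' {D K : Type*} [CommRing D] [IsDomain D] [Field K] [Algebra D K]
    [IsFractionRing D K] {J' : FractionalIdeal D⁰ K} (hJ'0 : J' ≠ 0) :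
    (1 / J' : FractionalIdeal D⁰ K) ≠ 0 := by
  obtain ⟨dd, hdd, hddint⟩ := J'.isFractional
  intro hcon
  have hmem : algebraMap D K dd ∈ (1 / J' : FractionalIdeal D⁰ K) := by
    rw [FractionalIdeal.mem_div_iff_of_ne_zero hJ'0]
    intro b hb
    obtain ⟨cb, hcb⟩ := hddint b hb
    exact (FractionalIdeal.mem_one_iff D⁰).mpr ⟨cb, by rw [hcb, Algebra.smul_def]⟩
  rw [hcon] at hmem
  have h0 : algebraMap D K dd = 0 := (FractionalIdeal.mem_zero_iff D⁰).mp hmem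
  exact absurd h0 (IsFractionRing.to_map_ne_zero_of_mem_nonZeroDivisors hdd)

lemma one_div_eq_of_tClosure' {D K : Type*} [CommRing D] [IsDomain D] [Field K] [Algebra D K]
    [IsFractionRing D K] (H J : FractionalIdeal D⁰ K) (hHJ : H ≤ J)
    (hH : H ≠ 0) (hJ : J ≠ 0)
    (htc : (⨆ J' : {J' : FractionalIdeal D⁰ K // J' ≤ H ∧ (J' : Submodule D K).FG},
        ((1 / (1 / (J' : FractionalIdeal D⁰ K)) : FractionalIdeal D⁰ K) : Submodule D K)) =
      ⨆ J' : {J' : FractionalIdeal D⁰ K // J' ≤ J ∧ (J' : Submodule D K).FG},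
        ((1 / (1 / (J' : FractionalIdeal D⁰ K)) : FractionalIdeal D⁰ K) : Submodule D K)) :
    (1 / H : FractionalIdeal D⁰ K) = 1 / J := by
  refine le_antisymm ?_ ?_
  · rw [FractionalIdeal.le_div_iff_mul_le hJ, FractionalIdeal.mul_le]
    intro xx hxx yy hyy
    have hyy' : yy ∈ ⨆ J' : {J' : FractionalIdeal D⁰ K // J' ≤ H ∧ (J' : Submodule D K).FG},
        ((1 / (1 / (J' : FractionalIdeal D⁰ K)) : FractionalIdeal D⁰ K) : Submodule D K) := by
      rw [htc]
      exact le_tClosure' J hyy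
    have hT : (⨆ J' : {J' : FractionalIdeal D⁰ K // J' ≤ H ∧ (J' : Submodule D K).FG},
          ((1 / (1 / (J' : FractionalIdeal D⁰ K)) : FractionalIdeal D⁰ K) : Submodule D K)) ≤
        Submodule.comap (LinearMap.mul D K xx) ((1 : FractionalIdeal D⁰ K) : Submodule D K) := by
      refine iSup_le ?_
      rintro ⟨J', hJ'le, hfg'⟩
      by_cases hJ'0 : J' = 0
      · simp [hJ'0]
      · intro w hw
        replace hw : w ∈ (1 : FractionalIdeal D⁰ K) / (1 / J') := hw
        rw [FractionalIdeal.mem_div_iff_of_ne_zero (one_div_ne_zero' hJ'0)] at hw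
        have hxxJ' : xx ∈ (1 : FractionalIdeal D⁰ K) / J' := by
          rw [FractionalIdeal.mem_div_iff_of_ne_zero hJ'0]
          intro b hb
          exact (FractionalIdeal.mem_div_iff_of_ne_zero hH).mp hxx b (hJ'le hb)
        show (LinearMap.mul D K xx) w ∈ ((1 : FractionalIdeal D⁰ K) : Submodule D K)
        rw [LinearMap.mul_apply', mul_comm]
        exact FractionalIdeal.mem_coe.mpr (hw xx hxxJ')
    have h3 := hT hyy'
    rw [Submodule.mem_comap, LinearMap.mul_apply'] at h3
    exact FractionalIdeal.mem_coe.mp h3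
  · rw [FractionalIdeal.le_div_iff_mul_le hH]
    have h2 : (1 / J : FractionalIdeal D⁰ K) * J ≤ 1 := by
      rw [mul_comm]; exact FractionalIdeal.mul_one_div_le_one
    calc (1 / J : FractionalIdeal D⁰ K) * H ≤ (1 / J) * J :=
          FractionalIdeal.mul_le.mpr fun i hi j hj =>
            FractionalIdeal.mul_mem_mul hi (hHJ hj)
    _ ≤ 1 := h2


/-- If `I` is a flat nonzero fractional ideal, then `(I : J) = I · J⁻¹` for every nonzero
`t`-finite fractional ideal `J`. -/
theorem div_eq_mul_inv_of_flat_of_tFinite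
    (D K : Type*) [CommRing D] [IsDomain D] [Field K] [Algebra D K] [IsFractionRing D K]
    (I : FractionalIdeal D⁰ K) (hI : I ≠ 0)
    (hflat : Module.Flat D (I : Submodule D K))
    (J : FractionalIdeal D⁰ K) (hJ : J ≠ 0)
    (htf : ∃ H : FractionalIdeal D⁰ K, H ≤ J ∧ (H : Submodule D K).FG ∧
      tClosure D K H = tClosure D K J) :
    I / J = I * (1 / J) := by
  obtain ⟨H, hHJ, hfg, htc⟩ := htf
  have htc' : (⨆ J' : {J' : FractionalIdeal D⁰ K // J' ≤ H ∧ (J' : Submodule D K).FG},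
      ((1 / (1 / (J' : FractionalIdeal D⁰ K)) : FractionalIdeal D⁰ K) : Submodule D K)) =
      ⨆ J' : {J' : FractionalIdeal D⁰ K // J' ≤ J ∧ (J' : Submodule D K).FG},
      ((1 / (1 / (J' : FractionalIdeal D⁰ K)) : FractionalIdeal D⁰ K) : Submodule D K) := htc
  have hH0 : H ≠ 0 := by
    rintro rfl
    apply hJ
    rw [← FractionalIdeal.coeToSubmodule_injective.eq_iff, FractionalIdeal.coe_zero]
    have h1 := (le_tClosure' J).trans (le_of_eq htc'.symm)
    have h2 : (⨆ J' : {J' : FractionalIdeal D⁰ K //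
          J' ≤ (0 : FractionalIdeal D⁰ K) ∧ (J' : Submodule D K).FG},
        ((1 / (1 / (J' : FractionalIdeal D⁰ K)) : FractionalIdeal D⁰ K) : Submodule D K)) ≤ ⊥ := by
      refine iSup_le ?_
      rintro ⟨J', hJ'le, hfg'⟩
      have hz : J' = 0 := le_antisymm hJ'le (FractionalIdeal.zero_le J')
      simp [hz]
    exact le_bot_iff.mp (h1.trans h2)
  have hinv := one_div_eq_of_tClosure' H J hHJ hH0 hJ htc'
  refine le_antisymm ?_ ?_
  · have h1 : I / J ≤ I / H := by
      rw [FractionalIdeal.le_div_iff_mul_le hH0]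
      calc I / J * H ≤ I / J * J :=
            FractionalIdeal.mul_le.mpr fun i hi j hj => FractionalIdeal.mul_mem_mul hi (hHJ hj)
      _ ≤ I := (FractionalIdeal.le_div_iff_mul_le hJ).mp le_rfl
    refine h1.trans ?_
    rw [← hinv]
    exact flat_div_le I H hflat hH0 hfg
  · rw [FractionalIdeal.le_div_iff_mul_le hJ]
    have h2 : (1 / J : FractionalIdeal D⁰ K) * J ≤ 1 := by
      rw [mul_comm]; exact FractionalIdeal.mul_one_div_le_one
    calc I * (1 / J) * J = I * ((1 / J) * J) := by rw [mul_assoc]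
    _ ≤ I * 1 := FractionalIdeal.mul_le.mpr fun i hi j hj =>
        FractionalIdeal.mul_mem_mul hi (h2 hj)
    _ = I := mul_one I
end
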